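/- arXiv:1703.01511 — 4 statements merged into one kernel-verified Lean document; each statement's English description precedes it below -/
import Mathlib

section
/- Let d ≥ 2 and suppose 𝒞 ∈ 𝕏_d is a convex domain such that 𝒞 ∩ (e₁ + span_ℂ{e₂,…,e_d}) = ∅ and the slice 𝒞 ∩ span_ℂ{e₁,e₂}, regarded as a convex domain in ℂ² via the identification (z₁,z₂) ↦ z₁e₁ + z₂e₂, belongs to 𝕂₂. Then there exists a complex affine automorphism A of ℂ^d such that A restricts to the identity on span_ℂ{e₁,e₂} and A(𝒞) ∈ 𝕂_d. -/
open Set Metric Filter Asymptotics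

noncomputable section

abbrev Eucl (d : ℕ) : Type := EuclideanSpace ℂ (Fin d)

/-- The `i`-th standard basis vector of `ℂ^d`. -/
def stdB (d : ℕ) (i : Fin d) : Eucl d := EuclideanSpace.single i 1

/-- `ρ : U → ℝ` is a local `C^k` defining function for `Ω` on the open set `U`. -/
def IsLocalDefining (d k : ℕ) (Ω U : Set (Eucl d)) (ρ : Eucl d → ℝ) : Prop :=
  IsOpen U ∧ ContDiffOn ℝ k ρ U ∧
  Ω ∩ U = {x | x ∈ U ∧ ρ x < 0} ∧
  ∀ ξ ∈ U, ρ ξ = 0 → fderiv ℝ ρ ξ ≠ 0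

/-- `Ω` has `C^k` boundary. -/
def HasCkBoundary (d k : ℕ) (Ω : Set (Eucl d)) : Prop :=
  ∀ ξ₀ ∈ frontier Ω, ∃ (U : Set (Eucl d)) (ρ : Eucl d → ℝ),
    ξ₀ ∈ U ∧ IsLocalDefining d k Ω U ρ

/-- `Ω` has `C^{2,α}` boundary: local `C²` defining functions with `α`-Hölder second derivative. -/
def HasC2HolderBoundary (d : ℕ) (α : ℝ) (Ω : Set (Eucl d)) : Prop :=
  ∀ ξ₀ ∈ frontier Ω, ∃ (U : Set (Eucl d)) (ρ : Eucl d → ℝ),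
    ξ₀ ∈ U ∧ IsLocalDefining d 2 Ω U ρ ∧
    ∃ C : NNReal, HolderOnWith C α.toNNReal (iteratedFDeriv ℝ 2 ρ) U

/-- `Ω` (with `C²` boundary) is strongly pseudoconvex. -/
def StronglyPseudoconvex (d : ℕ) (Ω : Set (Eucl d)) : Prop :=
  HasCkBoundary d 2 Ω ∧
  ∀ ξ ∈ frontier Ω, ∃ (U : Set (Eucl d)) (ρ : Eucl d → ℝ),
    ξ ∈ U ∧ IsLocalDefining d 2 Ω U ρ ∧
    ∀ v : Eucl d, v ≠ 0 → fderiv ℝ ρ ξ v = 0 → fderiv ℝ ρ ξ (Complex.I • v) = 0 →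
      0 < iteratedFDeriv ℝ 2 ρ ξ ![v, v] +
          iteratedFDeriv ℝ 2 ρ ξ ![Complex.I • v, Complex.I • v]

/-- A domain: nonempty connected open set. -/
def IsDomain' (d : ℕ) (Ω : Set (Eucl d)) : Prop := IsOpen Ω ∧ IsConnected Ω

/-- A convex domain: nonempty open convex set. -/
def IsConvexDomain (d : ℕ) (Ω : Set (Eucl d)) : Prop :=
  Ω.Nonempty ∧ IsOpen Ω ∧ Convex ℝ Ω

/-- Two sets are biholomorphic. -/
def Biholomorphic (d : ℕ) (Ω₁ Ω₂ : Set (Eucl d)) : Prop :=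
  ∃ f g : Eucl d → Eucl d,
    DifferentiableOn ℂ f Ω₁ ∧ DifferentiableOn ℂ g Ω₂ ∧
    MapsTo f Ω₁ Ω₂ ∧ MapsTo g Ω₂ Ω₁ ∧
    (∀ x ∈ Ω₁, g (f x) = x) ∧ (∀ y ∈ Ω₂, f (g y) = y)

/-- `δ_Ω(z)`: distance to the boundary. -/
def bddDist (d : ℕ) (Ω : Set (Eucl d)) (z : Eucl d) : ℝ := infDist z (frontier Ω)

/-- `δ_Ω(z; v)`: distance to the boundary in the complex direction `v`. -/
def bddDistDir (d : ℕ) (Ω : Set (Eucl d)) (z v : Eucl d) : ℝ :=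
  infDist z (frontier Ω ∩ {w | ∃ ζ : ℂ, w = z + ζ • v})

/-- The squeezing function. -/
def squeezingFun (d : ℕ) (Ω : Set (Eucl d)) (p : Eucl d) : ℝ :=
  sSup {r : ℝ | 0 < r ∧ ∃ f : Eucl d → Eucl d,
    InjOn f Ω ∧ DifferentiableOn ℂ f Ω ∧ f p = 0 ∧
    f '' Ω ⊆ ball (0 : Eucl d) 1 ∧ ball (0 : Eucl d) r ⊆ f '' Ω}

/-- Membership in `𝕏_d`: convex domains containing no complex affine line. -/
def InXd (d : ℕ) (Ω : Set (Eucl d)) : Prop :=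
  IsConvexDomain d Ω ∧ ¬ ∃ (z v : Eucl d), v ≠ 0 ∧ ∀ ζ : ℂ, z + ζ • v ∈ Ω

/-- Convergence in the local Hausdorff topology. -/
def LocHausTendsto (d : ℕ) (C : ℕ → Set (Eucl d)) (D : Set (Eucl d)) : Prop :=
  ∃ R₀ : ℝ, 0 < R₀ ∧ ∀ R : ℝ, R₀ ≤ R →
    Tendsto (fun n => hausdorffDist (closure (C n) ∩ closedBall (0 : Eucl d) R)
      (closure D ∩ closedBall (0 : Eucl d) R)) atTop (nhds 0)

/-- An intrinsic function on `𝕏_{d,0}`. -/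
def IntrinsicFun (d : ℕ) (f : Set (Eucl d) → Eucl d → ℝ) : Prop :=
  ∀ C₁ C₂ : Set (Eucl d), ∀ x₁ x₂ : Eucl d,
    InXd d C₁ → InXd d C₂ → x₁ ∈ C₁ → x₂ ∈ C₂ →
    (∃ φ ψ : Eucl d → Eucl d,
      DifferentiableOn ℂ φ C₁ ∧ DifferentiableOn ℂ ψ C₂ ∧
      MapsTo φ C₁ C₂ ∧ MapsTo ψ C₂ C₁ ∧
      (∀ x ∈ C₁, ψ (φ x) = x) ∧ (∀ y ∈ C₂, φ (ψ y) = y) ∧ φ x₁ = x₂) →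
    f C₁ x₁ = f C₂ x₂

/-- Continuity of a function on `𝕏_{d,0}` with respect to the local Hausdorff topology. -/
def IntrinsicContinuousFun (d : ℕ) (f : Set (Eucl d) → Eucl d → ℝ) : Prop :=
  ∀ (C : ℕ → Set (Eucl d)) (x : ℕ → Eucl d) (D : Set (Eucl d)) (y : Eucl d),
    (∀ n, InXd d (C n)) → (∀ n, x n ∈ C n) → InXd d D → y ∈ D →
    LocHausTendsto d C D → Tendsto x atTop (nhds y) →
    Tendsto (fun n => f (C n) (x n)) atTop (nhds (f D y))

/-- Upper semicontinuity of a function on `𝕏_{d,0}`. -/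
def IntrinsicUSCFun (d : ℕ) (f : Set (Eucl d) → Eucl d → ℝ) : Prop :=
  ∀ (C : ℕ → Set (Eucl d)) (x : ℕ → Eucl d) (D : Set (Eucl d)) (y : Eucl d),
    (∀ n, InXd d (C n)) → (∀ n, x n ∈ C n) → InXd d D → y ∈ D →
    LocHausTendsto d C D → Tendsto x atTop (nhds y) →
    Filter.limsup (fun n => f (C n) (x n)) atTop ≤ f D y

/-- Membership in `𝕂_d`. -/
def InKd (d : ℕ) (Ω : Set (Eucl d)) : Prop :=
  InXd d Ω ∧ ∀ i : Fin d,
    {w : Eucl d | ∃ ζ : ℂ, ‖ζ‖ < 1 ∧ w = ζ • stdB d i} ⊆ Ω ∧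
    Ω ∩ {x : Eucl d | ∃ y ∈ Submodule.span ℂ (stdB d '' {j : Fin d | i < j}),
      x = stdB d i + y} = ∅

/-- `D ∈ BlowUp(C)`. -/
def InBlowUp (d : ℕ) (C D : Set (Eucl d)) : Prop :=
  InXd d D ∧
  ∃ (x : ℕ → Eucl d) (xlim : Eucl d) (A : ℕ → (Eucl d ≃ᵃ[ℂ] Eucl d)),
    (∀ n, x n ∈ C) ∧
    (∀ K : Set (Eucl d), K ⊆ C → IsCompact K → ∀ᶠ n in atTop, x n ∉ K) ∧
    xlim ∈ D ∧
    LocHausTendsto d (fun n => (A n) '' C) D ∧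
    Tendsto (fun n => A n (x n)) atTop (nhds xlim)

/-- The unit disc in `ℂ`. -/
def unitDisc : Set ℂ := ball (0 : ℂ) 1

/-- The Poincaré distance on the unit disc. -/
def poincareDist (a b : ℂ) : ℝ :=
  (1 / 2) * Real.log ((1 + ‖(a - b) / (1 - (starRingEnd ℂ) b * a)‖) /
    (1 - ‖(a - b) / (1 - (starRingEnd ℂ) b * a)‖))

/-- The Kobayashi pseudodistance of `Ω`, defined via chains of holomorphic discs. -/
def kobayashiDist {F : Type*} [NormedAddCommGroup F] [NormedSpace ℂ F]
    (Ω : Set F) (x y : F) : ℝ :=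
  sInf {r : ℝ | ∃ (m : ℕ) (a b : Fin (m + 1) → ℂ) (f : Fin (m + 1) → ℂ → F),
    (∀ i, a i ∈ unitDisc) ∧ (∀ i, b i ∈ unitDisc) ∧
    (∀ i, DifferentiableOn ℂ (f i) unitDisc) ∧
    (∀ i, MapsTo (f i) unitDisc Ω) ∧
    f 0 (a 0) = x ∧
    (∀ i : Fin m, f i.castSucc (b i.castSucc) = f i.succ (a i.succ)) ∧
    f (Fin.last m) (b (Fin.last m)) = y ∧
    r = ∑ i, poincareDist (a i) (b i)}

/-- A geodesic ray `γ : [0,∞) → Ω` for the Kobayashi distance. -/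
def IsGeodesicRay {F : Type*} [NormedAddCommGroup F] [NormedSpace ℂ F]
    (Ω : Set F) (γ : ℝ → F) : Prop :=
  (∀ t : ℝ, 0 ≤ t → γ t ∈ Ω) ∧
  ∀ s t : ℝ, 0 ≤ s → 0 ≤ t → kobayashiDist Ω (γ s) (γ t) = |s - t|

/-- A complex geodesic `φ : 𝔻 → Ω`. -/
def IsComplexGeodesic {F : Type*} [NormedAddCommGroup F] [NormedSpace ℂ F]
    (Ω : Set F) (φ : ℂ → F) : Prop :=
  DifferentiableOn ℂ φ unitDisc ∧ MapsTo φ unitDisc Ω ∧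
  ∀ z ∈ unitDisc, ∀ w ∈ unitDisc, kobayashiDist Ω (φ z) (φ w) = poincareDist z w

/-- The upper half-plane in `ℂ`. -/
def upperHalf : Set ℂ := {z : ℂ | 0 < z.im}

/-- `u` is the inward-pointing unit normal vector of `∂Ω` at `ξ`. -/
def IsInwardUnitNormal (d : ℕ) (Ω : Set (Eucl d)) (ξ u : Eucl d) : Prop :=
  ‖u‖ = 1 ∧ ∃ (U : Set (Eucl d)) (ρ : Eucl d → ℝ),
    ξ ∈ U ∧ IsLocalDefining d 1 Ω U ρ ∧
    ∃ c : ℝ, 0 < c ∧ ∀ w : Eucl d, fderiv ℝ ρ ξ w = -c * (inner ℂ u w : ℂ).re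

/-- `v` lies in the complex tangent space `T^ℂ_ξ ∂Ω`. -/
def InComplexTangent (d : ℕ) (Ω : Set (Eucl d)) (ξ v : Eucl d) : Prop :=
  ∃ (U : Set (Eucl d)) (ρ : Eucl d → ℝ),
    ξ ∈ U ∧ IsLocalDefining d 1 Ω U ρ ∧
    fderiv ℝ ρ ξ v = 0 ∧ fderiv ℝ ρ ξ (Complex.I • v) = 0

/-- The Siegel model of the unit ball. -/
def Siegel (d : ℕ) (h : 0 < d) : Set (Eucl d) :=
  {z : Eucl d | (∑ i : Fin d, if 0 < (i : ℕ) then ‖z i‖ ^ 2 else 0)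
    < (z ⟨0, h⟩).im}



lemma my_sep {d : ℕ} {C : Set (Eucl d)} (hconv : Convex ℝ C) (hopen : IsOpen C)
    {u : Eucl d} (hu : u ∉ C) :
    ∃ φ : Eucl d →L[ℂ] ℂ, ∀ x ∈ C, (φ x).re < (φ u).re := by
  obtain ⟨f, hf⟩ := geometric_hahn_banach_open_point hconv hopen hu
  refine ⟨(f.extendTo𝕜' : Eucl d →L[ℂ] ℂ), fun x hx => ?_⟩
  have h1 : ((f.extendTo𝕜' : Eucl d →L[ℂ] ℂ) x).re = f x := by
    rw [← RCLike.re_to_complex]; exact f.toLinearMap.extendTo𝕜'_apply_re (𝕜 := ℂ) x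
  have h2 : ((f.extendTo𝕜' : Eucl d →L[ℂ] ℂ) u).re = f u := by
    rw [← RCLike.re_to_complex]; exact f.toLinearMap.extendTo𝕜'_apply_re (𝕜 := ℂ) u
  rw [h1, h2]; exact hf x hx

lemma my_disc {d : ℕ} {C : Set (Eucl d)} (hopen : IsOpen C)
    (hline : ¬ ∃ (z v : Eucl d), v ≠ 0 ∧ ∀ ζ : ℂ, z + ζ • v ∈ C)
    (h0 : (0 : Eucl d) ∈ C) {u₀ : Eucl d} (hu₀ : u₀ ≠ 0) :
    ∃ c : ℂ, c ≠ 0 ∧ (∀ ζ : ℂ, ‖ζ‖ < 1 → ζ • (c • u₀) ∈ C) ∧ c • u₀ ∉ C := by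
  set D : Set ℂ := {ζ : ℂ | ζ • u₀ ∈ C}ᶜ with hD
  have hcont : Continuous (fun ζ : ℂ => ζ • u₀) := continuous_id.smul continuous_const
  have hDc : IsClosed D := (hopen.preimage hcont).isClosed_compl
  have hne : D.Nonempty := by
    by_contra h
    rw [Set.not_nonempty_iff_eq_empty, hD, Set.compl_empty_iff] at h
    exact hline ⟨0, u₀, hu₀, fun ζ => by
      have : ζ ∈ ({ζ : ℂ | ζ • u₀ ∈ C} : Set ℂ) := h ▸ Set.mem_univ ζ
      simpa using this⟩
  obtain ⟨ζ₀, hζ₀D, hζ₀d⟩ := hDc.exists_infDist_eq_dist hne 0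
  have h0D : (0 : ℂ) ∉ D := by simp [hD]; simpa using h0
  have hrpos : 0 < infDist 0 D := (hDc.notMem_iff_infDist_pos hne).1 h0D
  have habs : dist (0 : ℂ) ζ₀ = ‖ζ₀‖ := by
    rw [dist_comm, Complex.dist_eq]; simp
  have hζ₀ne : ζ₀ ≠ 0 := by
    intro h; rw [h] at hζ₀D; exact h0D hζ₀D
  refine ⟨ζ₀, hζ₀ne, fun ζ hζ => ?_, by simpa [hD] using hζ₀D⟩
  have hmem : ζ * ζ₀ ∉ D := by
    intro hmem
    have := infDist_le_dist_of_mem (x := (0:ℂ)) hmem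
    rw [dist_comm, Complex.dist_eq, sub_zero, norm_mul] at this
    have hlt : ‖ζ‖ * ‖ζ₀‖ < ‖ζ₀‖ := by
      have : ‖ζ₀‖ = infDist (0:ℂ) D := by rw [hζ₀d, habs]
      nlinarith [norm_nonneg ζ₀, hrpos, this]
    rw [hζ₀d, habs] at this
    linarith
  rw [smul_smul]
  simpa [hD] using hmem

lemma my_exists_ker {d n : ℕ} (hn : n < d) (φ : Fin d → (Eucl d →L[ℂ] ℂ)) :
    ∃ v : Eucl d, v ≠ 0 ∧ ∀ i : Fin d, (i : ℕ) < n → φ i v = 0 := by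
  set L : Eucl d →ₗ[ℂ] (Fin n → ℂ) :=
    LinearMap.pi (fun k : Fin n => (φ ⟨k.1, k.2.trans hn⟩).toLinearMap) with hL
  have hker : LinearMap.ker L ≠ ⊥ := by
    intro h
    have hinj : Function.Injective L := LinearMap.ker_eq_bot.mp h
    have hle := LinearMap.finrank_le_finrank_of_injective hinj
    rw [finrank_euclideanSpace_fin] at hle
    rw [Module.finrank_fintype_fun_eq_card] at hle
    simp at hle; omega
  obtain ⟨v, hvL, hv0⟩ := Submodule.exists_mem_ne_zero_of_ne_bot hker
  refine ⟨v, hv0, fun i hi => ?_⟩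
  have h := congrFun (LinearMap.mem_ker.1 hvL) ⟨i.1, hi⟩
  simpa [hL, LinearMap.pi_apply] using h

lemma my_coord {d : ℕ} (hd : 0 < d) (w : Eucl d) (hw : w ⟨0, hd⟩ = 0) :
    w ∈ Submodule.span ℂ (stdB d '' {j : Fin d | (⟨0, hd⟩ : Fin d) < j}) := by
  have hrep : w = ∑ j : Fin d, w j • stdB d j := by
    ext k
    have h1 : (∑ j : Fin d, w j • stdB d j) k = ∑ j : Fin d, (w j • stdB d j) k := by
      simp only [WithLp.ofLp_sum, Finset.sum_apply]
    rw [h1]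
    simp [stdB, EuclideanSpace.single_apply]
  rw [hrep]
  refine Submodule.sum_mem _ (fun j _ => ?_)
  by_cases hj : j = ⟨0, hd⟩
  · rw [hj, hw, zero_smul]; exact Submodule.zero_mem _
  · refine Submodule.smul_mem _ _ (Submodule.subset_span ⟨j, ?_, rfl⟩)
    simp only [Set.mem_setOf_eq, Fin.lt_def]
    exact Nat.pos_of_ne_zero (fun h => hj (Fin.ext h))

lemma my_step {d : ℕ} {C : Set (Eucl d)} {n : ℕ} (hn : n < d) (hd : 2 ≤ d)
    (u : Fin d → Eucl d) (φ : Fin d → (Eucl d →L[ℂ] ℂ))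
    (H1 : ∀ j : Fin d, (j : ℕ) < n → ∀ ζ : ℂ, ‖ζ‖ < 1 → ζ • u j ∈ C)
    (H2 : ∀ i j : Fin d, (j : ℕ) < n → i < j → φ i (u j) = 0)
    (H3 : 0 < n → u ⟨0, by omega⟩ = stdB d ⟨0, by omega⟩ ∧
      φ ⟨0, by omega⟩ = EuclideanSpace.proj (⟨0, by omega⟩ : Fin d))
    (H4 : 1 < n → u ⟨1, by omega⟩ = stdB d ⟨1, by omega⟩)
    (H5 : ∀ i : Fin d, 1 ≤ (i : ℕ) → (i : ℕ) < n → ∀ x ∈ C, (φ i x).re < (φ i (u i)).re)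
    (H6 : ∀ i : Fin d, (i : ℕ) < n → φ i (u i) ≠ 0)
    (w : Eucl d) (ψ : Eucl d →L[ℂ] ℂ)
    (hw1 : ∀ ζ : ℂ, ‖ζ‖ < 1 → ζ • w ∈ C)
    (hw2 : ∀ i : Fin d, (i : ℕ) < n → φ i w = 0)
    (hw3 : ψ w ≠ 0)
    (hw0 : n = 0 → w = stdB d ⟨0, by omega⟩ ∧ ψ = EuclideanSpace.proj (⟨0, by omega⟩ : Fin d))
    (hw1' : n = 1 → w = stdB d ⟨1, by omega⟩)
    (hwsep : 1 ≤ n → ∀ x ∈ C, (ψ x).re < (ψ w).re) :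
    ∃ (u' : Fin d → Eucl d) (φ' : Fin d → (Eucl d →L[ℂ] ℂ)),
      (∀ j : Fin d, (j : ℕ) < n + 1 → ∀ ζ : ℂ, ‖ζ‖ < 1 → ζ • u' j ∈ C) ∧
      (∀ i j : Fin d, (j : ℕ) < n + 1 → i < j → φ' i (u' j) = 0) ∧
      (0 < n + 1 → u' ⟨0, by omega⟩ = stdB d ⟨0, by omega⟩ ∧
        φ' ⟨0, by omega⟩ = EuclideanSpace.proj (⟨0, by omega⟩ : Fin d)) ∧
      (1 < n + 1 → u' ⟨1, by omega⟩ = stdB d ⟨1, by omega⟩) ∧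
      (∀ i : Fin d, 1 ≤ (i : ℕ) → (i : ℕ) < n + 1 → ∀ x ∈ C, (φ' i x).re < (φ' i (u' i)).re) ∧
      (∀ i : Fin d, (i : ℕ) < n + 1 → φ' i (u' i) ≠ 0) := by
  set iN : Fin d := ⟨n, hn⟩ with hiN
  have hval : (iN : ℕ) = n := rfl
  set u' : Fin d → Eucl d := Function.update u iN w with hu'
  set φ' : Fin d → (Eucl d →L[ℂ] ℂ) := Function.update φ iN ψ with hφ'
  have hult : ∀ j : Fin d, (j : ℕ) < n → u' j = u j := by
    intro j hj
    exact Function.update_of_ne (by intro h; rw [h, hval] at hj; omega) _ _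
  have hφlt : ∀ j : Fin d, (j : ℕ) < n → φ' j = φ j := by
    intro j hj
    exact Function.update_of_ne (by intro h; rw [h, hval] at hj; omega) _ _
  have huN : u' iN = w := Function.update_self _ _ _
  have hφN : φ' iN = ψ := Function.update_self _ _ _
  have hcase : ∀ j : Fin d, (j : ℕ) < n + 1 → (j : ℕ) < n ∨ j = iN := by
    intro j hj
    rcases Nat.lt_or_ge (j : ℕ) n with h | h
    · exact Or.inl h
    · exact Or.inr (Fin.ext (by rw [hval]; omega))
  refine ⟨u', φ', ?_, ?_, ?_, ?_, ?_, ?_⟩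
  · intro j hj ζ hζ
    rcases hcase j hj with h | rfl
    · rw [hult j h]; exact H1 j h ζ hζ
    · rw [huN]; exact hw1 ζ hζ
  · intro i j hj hij
    rcases hcase j hj with h | rfl
    · have hi : (i : ℕ) < n := lt_trans (by exact_mod_cast hij) h
      rw [hult j h, hφlt i hi]; exact H2 i j h hij
    · have hi : (i : ℕ) < n := by exact_mod_cast hij
      rw [huN, hφlt i hi]; exact hw2 i hi
  · intro _
    by_cases h0 : n = 0
    · have hieq : (⟨0, by omega⟩ : Fin d) = iN := Fin.ext (show 0 = n by omega)
      have h1 : u' ⟨0, by omega⟩ = w := by rw [hieq]; exact huN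
      have h2 : φ' ⟨0, by omega⟩ = ψ := by rw [hieq]; exact hφN
      rw [h1, h2]
      exact hw0 h0
    · have hne : (⟨0, by omega⟩ : Fin d) ≠ iN := by
        intro h; apply h0; have := congrArg Fin.val h; rw [hval] at this
        simpa using this.symm
      constructor
      · rw [hu', Function.update_of_ne hne]; exact (H3 (by omega)).1
      · rw [hφ', Function.update_of_ne hne]; exact (H3 (by omega)).2
  · intro hn1
    by_cases h1 : n = 1
    · have hieq : (⟨1, by omega⟩ : Fin d) = iN := Fin.ext (show 1 = n by omega)
      have h2 : u' ⟨1, by omega⟩ = w := by rw [hieq]; exact huN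
      rw [h2]; exact hw1' h1
    · have hne : (⟨1, by omega⟩ : Fin d) ≠ iN := by
        intro h; apply h1; have := congrArg Fin.val h; rw [hval] at this
        simpa using this.symm
      rw [hu', Function.update_of_ne hne]; exact H4 (by omega)
  · intro i hi1 hi x hx
    rcases hcase i hi with h | rfl
    · rw [hult i h, hφlt i h]; exact H5 i hi1 h x hx
    · rw [huN, hφN]; exact hwsep (by omega) x hx
  · intro i hi
    rcases hcase i hi with h | rfl
    · rw [hult i h, hφlt i h]; exact H6 i h
    · rw [huN, hφN]; exact hw3

lemma my_rec {d : ℕ} (hd : 1 < d) {C : Set (Eucl d)}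
    (hopen : IsOpen C) (hconv : Convex ℝ C)
    (hline : ¬ ∃ (z v : Eucl d), v ≠ 0 ∧ ∀ ζ : ℂ, z + ζ • v ∈ C)
    (h0 : (0 : Eucl d) ∈ C)
    (hdisc1 : ∀ ζ : ℂ, ‖ζ‖ < 1 → ζ • stdB d ⟨0, by omega⟩ ∈ C)
    (hdisc2 : ∀ ζ : ℂ, ‖ζ‖ < 1 → ζ • stdB d ⟨1, by omega⟩ ∈ C)
    (he2 : stdB d ⟨1, by omega⟩ ∉ C) :
    ∀ n : ℕ, n ≤ d → ∃ (u : Fin d → Eucl d) (φ : Fin d → (Eucl d →L[ℂ] ℂ)),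
      (∀ j : Fin d, (j : ℕ) < n → ∀ ζ : ℂ, ‖ζ‖ < 1 → ζ • u j ∈ C) ∧
      (∀ i j : Fin d, (j : ℕ) < n → i < j → φ i (u j) = 0) ∧
      (0 < n → u ⟨0, by omega⟩ = stdB d ⟨0, by omega⟩ ∧
        φ ⟨0, by omega⟩ = EuclideanSpace.proj (⟨0, by omega⟩ : Fin d)) ∧
      (1 < n → u ⟨1, by omega⟩ = stdB d ⟨1, by omega⟩) ∧
      (∀ i : Fin d, 1 ≤ (i : ℕ) → (i : ℕ) < n → ∀ x ∈ C, (φ i x).re < (φ i (u i)).re) ∧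
      (∀ i : Fin d, (i : ℕ) < n → φ i (u i) ≠ 0) := by
  intro n
  induction n with
  | zero =>
    exact fun _ => ⟨(fun _ => 0), (fun _ => 0),
      fun j hj => absurd hj (Nat.not_lt_zero _),
      fun i j hj _ => absurd hj (Nat.not_lt_zero _),
      fun h => absurd h (lt_irrefl 0),
      fun h => absurd h (by omega),
      fun i _ hi => absurd hi (Nat.not_lt_zero _),
      fun i hi => absurd hi (Nat.not_lt_zero _)⟩
  | succ n IH =>
    intro hn1
    have hn : n < d := by omega
    obtain ⟨u, φ, H1, H2, H3, H4, H5, H6⟩ := IH (by omega)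
    -- produce w and ψ
    by_cases hn0 : n = 0
    · -- w = e₁, ψ = proj 0
      subst hn0
      obtain ⟨u', φ', P⟩ := my_step hn hd u φ H1 H2 H3 H4 H5 H6
        (stdB d ⟨0, by omega⟩) (EuclideanSpace.proj (⟨0, by omega⟩ : Fin d))
        hdisc1
        (fun i hi => absurd hi (Nat.not_lt_zero _))
        (by simp [stdB, EuclideanSpace.single_apply])
        (fun _ => ⟨rfl, rfl⟩)
        (fun h => absurd h (by omega))
        (fun h => absurd h (by omega))
      exact ⟨u', φ', P⟩
    · by_cases hn1' : n = 1
      · -- w = e₂, ψ by separation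
        subst hn1'
        obtain ⟨ψ, hψ⟩ := my_sep hconv hopen he2
        have hψne : ψ (stdB d ⟨1, by omega⟩) ≠ 0 := by
          intro h
          have := hψ 0 h0
          rw [map_zero, h] at this
          simp at this
        obtain ⟨u', φ', P⟩ := my_step hn hd u φ H1 H2 H3 H4 H5 H6
          (stdB d ⟨1, by omega⟩) ψ
          hdisc2
          (fun i hi => by
            have hieq : i = ⟨0, by omega⟩ := Fin.ext (show (i:ℕ) = 0 by omega)
            rw [hieq, (H3 (by omega)).2]
            simp [stdB, EuclideanSpace.single_apply])
          hψne
          (fun h => absurd h (by omega))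
          (fun _ => rfl)
          (fun _ => hψ)
        exact ⟨u', φ', P⟩
      · -- n ≥ 2
        obtain ⟨v, hv0, hvker⟩ := my_exists_ker hn φ
        obtain ⟨c, hc0, hcdisc, hcnot⟩ := my_disc hopen hline h0 hv0
        obtain ⟨ψ, hψ⟩ := my_sep hconv hopen hcnot
        have hψne : ψ (c • v) ≠ 0 := by
          intro h
          have := hψ 0 h0
          rw [map_zero, h] at this
          simp at this
        obtain ⟨u', φ', P⟩ := my_step hn hd u φ H1 H2 H3 H4 H5 H6
          (c • v) ψ
          hcdisc
          (fun i hi => by rw [map_smul, hvker i hi, smul_zero])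
          hψne
          (fun h => absurd h hn0)
          (fun h => absurd h hn1')
          (fun _ => hψ)
        exact ⟨u', φ', P⟩

theorem stmt_6 (d : ℕ) (hd : 2 ≤ d) (C : Set (Eucl d)) (hC : InXd d C)
    (h1 : C ∩ {x | ∃ y ∈ Submodule.span ℂ (stdB d '' {j : Fin d | (⟨0, by omega⟩ : Fin d) < j}),
        x = stdB d ⟨0, by omega⟩ + y} = ∅)
    (h2 : InKd 2 ((fun p : Eucl 2 =>
        p 0 • stdB d ⟨0, by omega⟩ + p 1 • stdB d ⟨1, by omega⟩) ⁻¹' C)) :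
    ∃ A : Eucl d ≃ᵃ[ℂ] Eucl d,
      (∀ x ∈ Submodule.span ℂ {stdB d ⟨0, by omega⟩, stdB d ⟨1, by omega⟩}, A x = x) ∧
      InKd d (A '' C) := by
  classical
  obtain ⟨⟨hne, hopen, hconv⟩, hline⟩ := hC
  -- extract facts from h2
  have hdisc1 : ∀ ζ : ℂ, ‖ζ‖ < 1 → ζ • stdB d ⟨0, by omega⟩ ∈ C := by
    intro ζ hζ
    have hmem := (h2.2 0).1 (show (ζ • stdB 2 0 : Eucl 2) ∈ _ from ⟨ζ, hζ, rfl⟩)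
    simp only [Set.mem_preimage] at hmem
    have e0 : (ζ • stdB 2 0 : Eucl 2) 0 = ζ := by
      simp [stdB, PiLp.smul_apply, EuclideanSpace.single_apply]
    have e1 : (ζ • stdB 2 0 : Eucl 2) 1 = 0 := by
      simp [stdB, PiLp.smul_apply, EuclideanSpace.single_apply]
    rw [e0, e1, zero_smul, add_zero] at hmem
    exact hmem
  have hdisc2 : ∀ ζ : ℂ, ‖ζ‖ < 1 → ζ • stdB d ⟨1, by omega⟩ ∈ C := by
    intro ζ hζ
    have hmem := (h2.2 1).1 (show (ζ • stdB 2 1 : Eucl 2) ∈ _ from ⟨ζ, hζ, rfl⟩)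
    simp only [Set.mem_preimage] at hmem
    have e0 : (ζ • stdB 2 1 : Eucl 2) 0 = 0 := by
      simp [stdB, PiLp.smul_apply, EuclideanSpace.single_apply]
    have e1 : (ζ • stdB 2 1 : Eucl 2) 1 = ζ := by
      simp [stdB, PiLp.smul_apply, EuclideanSpace.single_apply]
    rw [e0, e1, zero_smul, zero_add] at hmem
    exact hmem
  have h0 : (0 : Eucl d) ∈ C := by
    have := hdisc1 0 (by simp)
    simpa using this
  have he2 : stdB d ⟨1, by omega⟩ ∉ C := by
    intro hmem
    have hx : (stdB 2 1 : Eucl 2) ∈ (fun p : Eucl 2 =>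
        p 0 • stdB d ⟨0, by omega⟩ + p 1 • stdB d ⟨1, by omega⟩) ⁻¹' C := by
      simp only [Set.mem_preimage]
      have e0 : (stdB 2 1 : Eucl 2) 0 = 0 := by simp [stdB, EuclideanSpace.single_apply]
      have e1 : (stdB 2 1 : Eucl 2) 1 = 1 := by simp [stdB, EuclideanSpace.single_apply]
      rw [e0, e1, zero_smul, one_smul, zero_add]
      exact hmem
    have hy : (stdB 2 1 : Eucl 2) ∈ {x : Eucl 2 |
        ∃ y ∈ Submodule.span ℂ (stdB 2 '' {j : Fin 2 | 1 < j}), x = stdB 2 1 + y} :=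
      ⟨0, Submodule.zero_mem _, by rw [add_zero]⟩
    exact Set.eq_empty_iff_forall_notMem.1 (h2.2 1).2 _ ⟨hx, hy⟩
  -- run the recursion
  obtain ⟨u, φ, H1, H2, H3, H4, H5, H6⟩ :=
    my_rec hd hopen hconv hline h0 hdisc1 hdisc2 he2 d le_rfl
  -- linear independence
  have hLI : LinearIndependent ℂ u := by
    rw [linearIndependent_iff']
    intro s g hsum i his
    by_contra hgi
    set S := s.filter (fun j => g j ≠ 0) with hS
    have hSne : S.Nonempty := ⟨i, Finset.mem_filter.2 ⟨his, hgi⟩⟩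
    set i₀ := S.min' hSne with hi₀
    have hi₀S : i₀ ∈ S := S.min'_mem hSne
    obtain ⟨hi₀s, hgi₀⟩ := Finset.mem_filter.1 hi₀S
    have happ := congrArg (φ i₀) hsum
    rw [map_sum, map_zero] at happ
    have hsingle : ∀ j ∈ s, j ≠ i₀ → φ i₀ (g j • u j) = 0 := by
      intro j hjs hji
      rcases lt_or_gt_of_ne hji with h | h
      · have hnS : j ∉ S := fun hjS => absurd (S.min'_le j hjS) (not_le.2 h)
        have hgj : g j = 0 := by
          by_contra hg; exact hnS (Finset.mem_filter.2 ⟨hjs, hg⟩)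
        rw [hgj, zero_smul, map_zero]
      · rw [map_smul, H2 i₀ j j.2 h, smul_zero]
    rw [Finset.sum_eq_single i₀ hsingle (fun h => absurd hi₀s h)] at happ
    rw [map_smul, smul_eq_mul] at happ
    rcases mul_eq_zero.1 happ with h | h
    · exact hgi₀ h
    · exact H6 i₀ i₀.2 h
  haveI : Nonempty (Fin d) := ⟨⟨0, by omega⟩⟩
  have hcard : Fintype.card (Fin d) = Module.finrank ℂ (Eucl d) := by
    simp [finrank_euclideanSpace_fin]
  set b := basisOfLinearIndependentOfCardEqFinrank hLI hcard with hbdef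
  have hb : ⇑b = u := coe_basisOfLinearIndependentOfCardEqFinrank hLI hcard
  set T : Eucl d ≃ₗ[ℂ] Eucl d :=
    b.equiv (EuclideanSpace.basisFun (Fin d) ℂ).toBasis (Equiv.refl _) with hTdef
  have hT : ∀ j, T (u j) = stdB d j := by
    intro j
    rw [← hb, hTdef, Module.Basis.equiv_apply]
    simp [stdB, EuclideanSpace.basisFun_apply]
  have hTs : ∀ j, T.symm (stdB d j) = u j := by
    intro j
    rw [← hT j, LinearEquiv.symm_apply_apply]
  have hAco : ⇑(T.toAffineEquiv) = ⇑T := by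
    ext x; simp [LinearEquiv.coe_toAffineEquiv]
  refine ⟨T.toAffineEquiv, ?_, ?_⟩
  · -- fixes span{e₁, e₂}
    intro x hx
    have hsub : Submodule.span ℂ {stdB d ⟨0, by omega⟩, stdB d ⟨1, by omega⟩} ≤
        LinearMap.eqLocus (T : Eucl d →ₗ[ℂ] Eucl d) LinearMap.id := by
      rw [Submodule.span_le]
      intro y hy
      simp only [Set.mem_insert_iff, Set.mem_singleton_iff] at hy
      rcases hy with rfl | rfl
      · have h := hT ⟨0, by omega⟩
        rw [(H3 (by omega)).1] at h
        show T _ = _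
        simpa using h
      · have h := hT ⟨1, by omega⟩
        rw [H4 (by omega)] at h
        show T _ = _
        simpa using h
    have hmem := hsub hx
    rw [LinearMap.mem_eqLocus] at hmem
    rw [hAco]
    simpa using hmem
  · rw [Set.image_congr (fun x _ => congrFun hAco x)]
    -- InKd of T '' C
    have hTopen : IsOpenMap (⇑T) := by
      have h := T.toContinuousLinearEquiv.toHomeomorph.isOpenMap
      simpa using h
    refine ⟨⟨⟨hne.image _, hTopen C hopen, ?_⟩, ?_⟩, ?_⟩
    · -- convex
      have hc := hconv.linear_image ((T : Eucl d →ₗ[ℂ] Eucl d).restrictScalars ℝ)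
      simpa using hc
    · -- no complex line
      rintro ⟨z, v, hv, hl⟩
      apply hline
      refine ⟨T.symm z, T.symm v, ?_, fun ζ => ?_⟩
      · intro h0'
        apply hv
        have := congrArg (⇑T) h0'
        simpa using this
      · obtain ⟨cc, hcc, hc⟩ := hl ζ
        have heq : T.symm (z + ζ • v) = T.symm z + ζ • T.symm v := by
          rw [map_add, map_smul]
        rw [← heq, ← hc, T.symm_apply_apply]
        exact hcc
    · intro i
      constructor
      · rintro w ⟨ζ, hζ, rfl⟩
        exact ⟨ζ • u i, H1 i i.2 ζ hζ, by rw [map_smul, hT i]⟩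
      · rw [Set.eq_empty_iff_forall_notMem]
        rintro x ⟨⟨cx, hcx, hTcx⟩, ⟨y, hy, hxy⟩⟩
        have hTeq : T cx = stdB d i + y := by rw [hTcx, hxy]
        have hyspan : T.symm y ∈ Submodule.span ℂ (u '' {j : Fin d | i < j}) := by
          have hm1 : T.symm y ∈ Submodule.map (T.symm : Eucl d →ₗ[ℂ] Eucl d)
              (Submodule.span ℂ (stdB d '' {j : Fin d | i < j})) :=
            Submodule.mem_map_of_mem hy
          rw [Submodule.map_span] at hm1
          have himg : (⇑(T.symm : Eucl d →ₗ[ℂ] Eucl d)) '' (stdB d '' {j : Fin d | i < j})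
              = u '' {j : Fin d | i < j} := by
            rw [Set.image_image]
            exact Set.image_congr (fun j _ => by simpa using hTs j)
          rwa [himg] at hm1
        have hker : ∀ m : Fin d, m ≤ i → φ m (T.symm y) = 0 := by
          intro m hm
          have hle : Submodule.span ℂ (u '' {j : Fin d | i < j}) ≤ LinearMap.ker ((φ m : Eucl d →ₗ[ℂ] ℂ)) := by
            rw [Submodule.span_le]
            rintro _ ⟨j, hj, rfl⟩
            exact LinearMap.mem_ker.2 (H2 m j j.2 (lt_of_le_of_lt hm hj))
          exact LinearMap.mem_ker.1 (hle hyspan)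
        have hcxeq : cx = u i + T.symm y := by
          have h := congrArg (⇑T.symm) hTeq
          rw [T.symm_apply_apply, map_add, hTs] at h
          exact h
        by_cases hi0 : (i : ℕ) = 0
        · have hieq : i = ⟨0, by omega⟩ := Fin.ext hi0
          have hco : (T.symm y) ⟨0, by omega⟩ = 0 := by
            have h := hker i le_rfl
            rw [hieq, (H3 (by omega)).2] at h
            simpa using h
          have hspan2 := my_coord (by omega) (T.symm y) hco
          refine Set.eq_empty_iff_forall_notMem.1 h1 cx ⟨hcx, ⟨T.symm y, hspan2, ?_⟩⟩
          rw [hcxeq, hieq, (H3 (by omega)).1]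
        · have h5 := H5 i (by omega) i.2 cx hcx
          have heq2 : φ i cx = φ i (u i) := by
            rw [hcxeq, map_add, hker i le_rfl, add_zero]
          rw [heq2] at h5
          exact lt_irrefl _ h5

end
end

section
/- Suppose Ω ⊆ ℂ^d is a convex domain and L : ℂ → ℂ^d is an injective complex affine map whose image V = L(ℂ) satisfies L(ℍ) = V ∩ Ω, where ℍ = {ζ ∈ ℂ : Im ζ > 0} (i.e., the slice V ∩ Ω is a half-plane in the complex affine line V). Then K_Ω(L(z), L(w)) = K_ℍ(z, w) for all z, w ∈ ℍ. -/
open Set Metric Filter Asymptotics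

noncomputable section

lemma mem_unitDisc_iff {a : ℂ} : a ∈ unitDisc ↔ ‖a‖ < 1 := by
  simp [unitDisc, Complex.dist_eq]

lemma quot_abs_lt_one {a b : ℂ} (ha : a ∈ unitDisc) (hb : b ∈ unitDisc) :
    ‖(a - b) / (1 - (starRingEnd ℂ) b * a)‖ < 1 := by
  rw [mem_unitDisc_iff] at ha hb
  have ha2 : a.re ^ 2 + a.im ^ 2 < 1 := by
    have h := Complex.sq_norm a
    rw [Complex.normSq_apply] at h
    nlinarith [norm_nonneg a]
  have hb2 : b.re ^ 2 + b.im ^ 2 < 1 := by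
    have h := Complex.sq_norm b
    rw [Complex.normSq_apply] at h
    nlinarith [norm_nonneg b]
  have hden0 : (1 : ℂ) - (starRingEnd ℂ) b * a ≠ 0 := by
    intro h
    have h1 : ‖(starRingEnd ℂ) b * a‖ = 1 := by
      have : (starRingEnd ℂ) b * a = 1 := by linear_combination -h
      simp [this]
    rw [norm_mul, Complex.norm_conj] at h1
    nlinarith [norm_nonneg a, norm_nonneg b]
  have key : Complex.normSq (a - b) < Complex.normSq (1 - (starRingEnd ℂ) b * a) := by
    simp only [Complex.normSq_apply, Complex.sub_re, Complex.sub_im, Complex.mul_re,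
      Complex.mul_im, Complex.one_re, Complex.one_im, Complex.conj_re, Complex.conj_im]
    nlinarith [mul_pos (by linarith : (0:ℝ) < 1 - (a.re^2 + a.im^2))
      (by linarith : (0:ℝ) < 1 - (b.re^2 + b.im^2))]
  rw [norm_div, div_lt_one (norm_pos_iff.mpr hden0)]
  have h1 : ‖a - b‖ ^ 2 < ‖1 - (starRingEnd ℂ) b * a‖ ^ 2 := by
    rwa [Complex.sq_norm, Complex.sq_norm]
  exact lt_of_pow_lt_pow_left₀ 2 (norm_nonneg _) h1

lemma poincareDist_nonneg {a b : ℂ} (ha : a ∈ unitDisc) (hb : b ∈ unitDisc) :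
    0 ≤ poincareDist a b := by
  have ht := quot_abs_lt_one ha hb
  have ht0 := norm_nonneg ((a - b) / (1 - (starRingEnd ℂ) b * a))
  unfold poincareDist
  have : (1 : ℝ) ≤ (1 + ‖(a - b) / (1 - (starRingEnd ℂ) b * a)‖) /
      (1 - ‖(a - b) / (1 - (starRingEnd ℂ) b * a)‖) := by
    rw [le_div_iff₀ (by linarith)]
    linarith
  have := Real.log_nonneg this
  linarith

/-- The set of chain-lengths in the definition of the Kobayashi distance. -/
def KSet {F : Type*} [NormedAddCommGroup F] [NormedSpace ℂ F]
    (Ω : Set F) (x y : F) : Set ℝ :=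
  {r : ℝ | ∃ (m : ℕ) (a b : Fin (m + 1) → ℂ) (f : Fin (m + 1) → ℂ → F),
    (∀ i, a i ∈ unitDisc) ∧ (∀ i, b i ∈ unitDisc) ∧
    (∀ i, DifferentiableOn ℂ (f i) unitDisc) ∧
    (∀ i, MapsTo (f i) unitDisc Ω) ∧
    f 0 (a 0) = x ∧
    (∀ i : Fin m, f i.castSucc (b i.castSucc) = f i.succ (a i.succ)) ∧
    f (Fin.last m) (b (Fin.last m)) = y ∧
    r = ∑ i, poincareDist (a i) (b i)}

lemma kobayashiDist_eq_sInf_KSet {F : Type*} [NormedAddCommGroup F] [NormedSpace ℂ F]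
    (Ω : Set F) (x y : F) : kobayashiDist Ω x y = sInf (KSet Ω x y) := rfl

lemma KSet_nonneg {F : Type*} [NormedAddCommGroup F] [NormedSpace ℂ F]
    (Ω : Set F) (x y : F) : ∀ r ∈ KSet Ω x y, 0 ≤ r := by
  rintro r ⟨m, a, b, f, ha, hb, -, -, -, -, -, rfl⟩
  exact Finset.sum_nonneg fun i _ => poincareDist_nonneg (ha i) (hb i)

lemma KSet_subset {F G : Type*} [NormedAddCommGroup F] [NormedSpace ℂ F]
    [NormedAddCommGroup G] [NormedSpace ℂ G]
    {Ω₁ : Set F} {Ω₂ : Set G} {T : F → G} (hT : Differentiable ℂ T)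
    (hmap : MapsTo T Ω₁ Ω₂) (x y : F) :
    KSet Ω₁ x y ⊆ KSet Ω₂ (T x) (T y) := by
  rintro r ⟨m, a, b, f, ha, hb, hdiff, hm, h5, h6, h7, h8⟩
  refine ⟨m, a, b, fun i => T ∘ f i, ha, hb,
    fun i => hT.comp_differentiableOn (hdiff i),
    fun i => hmap.comp (hm i), ?_, fun i => ?_, ?_, h8⟩
  · simp [Function.comp, h5]
  · simp [Function.comp, h6 i]
  · simp [Function.comp, h7]

/-- The Cayley transform onto the upper half plane. -/
def cayley (ζ : ℂ) : ℂ := Complex.I * (1 + ζ) / (1 - ζ)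

lemma one_sub_ne_zero_of_mem {ζ : ℂ} (h : ζ ∈ unitDisc) : (1 : ℂ) - ζ ≠ 0 := by
  have h1 : ‖ζ‖ < 1 := by simpa [unitDisc, Complex.dist_eq] using h
  intro h0
  have h2 : ζ = 1 := by linear_combination -h0
  rw [h2] at h1
  simp at h1

lemma cayley_mapsTo : MapsTo cayley unitDisc upperHalf := by
  intro ζ hζ
  have hζ1 : ‖ζ‖ < 1 := by simpa [unitDisc, Complex.dist_eq] using hζ
  have hd : (1 : ℂ) - ζ ≠ 0 := one_sub_ne_zero_of_mem hζ
  have hns : 0 < Complex.normSq (1 - ζ) := Complex.normSq_pos.2 hd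
  have hsq : ζ.re ^ 2 + ζ.im ^ 2 < 1 := by
    have h := Complex.sq_norm ζ
    rw [Complex.normSq_apply] at h
    nlinarith [norm_nonneg ζ]
  show 0 < (cayley ζ).im
  rw [cayley, Complex.div_im]
  simp only [Complex.mul_re, Complex.mul_im, Complex.I_re, Complex.I_im, Complex.add_re,
    Complex.add_im, Complex.one_re, Complex.one_im, Complex.sub_re, Complex.sub_im]
  rw [div_sub_div_same]
  apply div_pos _ hns
  ring_nf
  nlinarith

lemma cayley_diffOn : DifferentiableOn ℂ cayley unitDisc := by
  apply DifferentiableOn.div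
  · exact (differentiable_const _).differentiableOn.mul
      ((differentiable_const _).add differentiable_id).differentiableOn
  · exact ((differentiable_const _).sub differentiable_id).differentiableOn
  · exact fun ζ hζ => one_sub_ne_zero_of_mem hζ

lemma add_I_ne_zero {z : ℂ} (hz : z ∈ upperHalf) : z + Complex.I ≠ 0 := by
  intro h
  have : (z + Complex.I).im = 0 := by rw [h]; simp
  simp only [Complex.add_im, Complex.I_im] at this
  have hz' : 0 < z.im := hz
  linarith

lemma cayley_pre_mem {z : ℂ} (hz : z ∈ upperHalf) :
    (z - Complex.I) / (z + Complex.I) ∈ unitDisc := by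
  have hz' : 0 < z.im := hz
  have hne := add_I_ne_zero hz
  rw [unitDisc, mem_ball, Complex.dist_eq, sub_zero, norm_div,
    div_lt_one (norm_pos_iff.mpr hne)]
  have h1 : ‖z - Complex.I‖ ^ 2 < ‖z + Complex.I‖ ^ 2 := by
    rw [Complex.sq_norm, Complex.sq_norm, Complex.normSq_apply, Complex.normSq_apply]
    simp only [Complex.add_re, Complex.add_im, Complex.sub_re, Complex.sub_im,
      Complex.I_re, Complex.I_im]
    nlinarith
  exact lt_of_pow_lt_pow_left₀ 2 (norm_nonneg _) h1

lemma cayley_inv {z : ℂ} (hz : z ∈ upperHalf) :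
    cayley ((z - Complex.I) / (z + Complex.I)) = z := by
  have hne := add_I_ne_zero hz
  have hd : (1 : ℂ) - (z - Complex.I) / (z + Complex.I) ≠ 0 :=
    one_sub_ne_zero_of_mem (cayley_pre_mem hz)
  rw [cayley, div_eq_iff hd]
  field_simp
  ring

lemma KSet_upperHalf_nonempty {z w : ℂ} (hz : z ∈ upperHalf) (hw : w ∈ upperHalf) :
    (KSet upperHalf z w).Nonempty := by
  refine ⟨poincareDist ((z - Complex.I) / (z + Complex.I))
      ((w - Complex.I) / (w + Complex.I)),
    0, fun _ => (z - Complex.I) / (z + Complex.I),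
    fun _ => (w - Complex.I) / (w + Complex.I), fun _ => cayley,
    fun _ => cayley_pre_mem hz, fun _ => cayley_pre_mem hw,
    fun _ => cayley_diffOn, fun _ => cayley_mapsTo,
    cayley_inv hz, fun i => i.elim0, cayley_inv hw, by simp⟩

theorem stmt_12 (d : ℕ) (hd : 1 ≤ d) (Ω : Set (Eucl d)) (hΩ : IsConvexDomain d Ω)
    (L : ℂ →ᵃ[ℂ] Eucl d) (hL : Function.Injective L)
    (hslice : L '' upperHalf = Set.range L ∩ Ω) :
    ∀ z ∈ upperHalf, ∀ w ∈ upperHalf,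
      kobayashiDist Ω (L z) (L w) = kobayashiDist upperHalf z w := by
  obtain ⟨hne, hopen, hconv⟩ := hΩ
  have hlin : ∀ z : ℂ, L z = z • (L 1 - L 0) + L 0 := by
    intro z
    have h1 : ∀ t : ℂ, L t = L.linear t + L 0 := fun t => by
      simpa using L.map_vadd (0 : ℂ) t
    rw [h1 z, h1 1]
    have h2 : L.linear z = z • L.linear 1 := by
      conv_lhs => rw [show z = z • (1:ℂ) by simp]
      exact L.linear.map_smul z 1
    rw [h2]; module
  have hLmem : ∀ z ∈ upperHalf, L z ∈ Ω := by
    intro z hz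
    have h : L z ∈ Set.range L ∩ Ω := by
      rw [← hslice]; exact ⟨z, hz, rfl⟩
    exact h.2
  have hL0 : L 0 ∉ Ω := by
    intro h
    have h1 : L 0 ∈ L '' upperHalf := by
      rw [hslice]; exact ⟨⟨0, rfl⟩, h⟩
    obtain ⟨t, ht, hte⟩ := h1
    have h2 := hL hte
    rw [h2] at ht
    have : (0:ℝ) < (0:ℂ).im := ht
    simp at this
  obtain ⟨f, hf⟩ := geometric_hahn_banach_open_point hconv hopen hL0
  set Λ : Eucl d →L[ℂ] ℂ := f.extendTo𝕜' with hΛdef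
  have hre : ∀ x : Eucl d, (Λ x).re = f x := by
    intro x
    rw [hΛdef]
    exact StrongDual.re_extendRCLike_apply (𝕜 := ℂ) f x
  set v : Eucl d := L 1 - L 0 with hv
  set a : ℂ := Λ v with had
  have hΛL : ∀ z : ℂ, Λ (L z) = z * a + Λ (L 0) := by
    intro z
    rw [hlin z, map_add, map_smul]
    simp [had, smul_eq_mul]
  have hkey : ∀ z ∈ upperHalf, (z * a).re < 0 := by
    intro z hz
    have h1 : (z * a).re = f (L z) - f (L 0) := by
      rw [← hre, ← hre, hΛL z]; simp
    rw [h1]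
    linarith [hf (L z) (hLmem z hz)]
  have hIa : 0 < a.im := by
    have h := hkey Complex.I (by simp [upperHalf])
    rw [Complex.mul_re] at h
    simp at h
    linarith
  have hrea : a.re = 0 := by
    by_contra h
    set x : ℝ := (a.im + 1) / a.re with hx
    have hz : ((x:ℂ) + Complex.I) ∈ upperHalf := by simp [upperHalf]
    have h3 := hkey _ hz
    rw [Complex.mul_re] at h3
    simp only [Complex.add_re, Complex.add_im, Complex.ofReal_re, Complex.ofReal_im,
      Complex.I_re, Complex.I_im, add_zero, zero_add, one_mul] at h3
    have h4 : x * a.re = a.im + 1 := div_mul_cancel₀ _ h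
    linarith
  have ha0 : a ≠ 0 := fun h => by simp [h] at hIa
  set P : Eucl d → ℂ := fun x => (Λ x - Λ (L 0)) / a with hPdef
  have hPL : ∀ z : ℂ, P (L z) = z := by
    intro z
    simp only [hPdef]
    rw [hΛL z]
    field_simp
    ring
  have hPmaps : MapsTo P Ω upperHalf := by
    intro x hx
    have h1 : (Λ x - Λ (L 0)).re < 0 := by
      rw [Complex.sub_re, hre, hre]
      linarith [hf x hx]
    show 0 < (P x).im
    simp only [hPdef]
    rw [Complex.div_im, hrea]
    have hns : 0 < Complex.normSq a := Complex.normSq_pos.2 ha0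
    have h2 : (Λ x - Λ (L 0)).re * a.im / Complex.normSq a < 0 :=
      div_neg_of_neg_of_pos (mul_neg_of_neg_of_pos h1 hIa) hns
    simp only [mul_zero, zero_div]
    linarith
  have hPdiff : Differentiable ℂ P := by
    rw [hPdef]
    simpa [div_eq_mul_inv] using (Λ.differentiable.sub_const (Λ (L 0))).mul_const a⁻¹
  have hLdiff : Differentiable ℂ (L : ℂ → Eucl d) := by
    have h : (L : ℂ → Eucl d) = fun z => z • (L 1 - L 0) + L 0 := funext hlin
    rw [h]
    exact (differentiable_id.smul_const _).add_const _
  have hLmaps : MapsTo (L : ℂ → Eucl d) upperHalf Ω := fun z hz => hLmem z hz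
  intro z hz w hw
  have hne1 := KSet_upperHalf_nonempty hz hw
  have hsub1 : KSet upperHalf z w ⊆ KSet Ω (L z) (L w) := KSet_subset hLdiff hLmaps z w
  have hsub2 : KSet Ω (L z) (L w) ⊆ KSet upperHalf z w := by
    have h := KSet_subset hPdiff hPmaps (L z) (L w)
    rwa [hPL z, hPL w] at h
  rw [kobayashiDist_eq_sInf_KSet, kobayashiDist_eq_sInf_KSet]
  apply le_antisymm
  · exact csInf_le_csInf ⟨0, fun r hr => KSet_nonneg Ω (L z) (L w) r hr⟩ hne1 hsub1
  · exact csInf_le_csInf ⟨0, fun r hr => KSet_nonneg upperHalf z w r hr⟩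
      (hne1.mono hsub1) hsub2

end
end

section
/- Suppose Ω ⊆ ℂ^d is a convex domain, H ⊆ ℂ^d is a complex affine hyperplane with H ∩ Ω = ∅, and P : ℂ^d → ℂ is a complex affine map with P^{-1}(0) = H. Then for all z₁, z₂ ∈ Ω: K_Ω(z₁, z₂) ≥ (1/2)·| log( |P(z₁)| / |P(z₂)| ) |. -/
open Set Metric Filter Asymptotics

noncomputable section

namespace Stmt13Aux

section
open Complex

lemma normSq_identity (a b : ℂ) :
    normSq (1 - (starRingEnd ℂ) a * b) - normSq (b - a) = (1 - normSq a) * (1 - normSq b) := by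
  simp [normSq_apply, Complex.sub_re, Complex.sub_im, Complex.mul_re, Complex.mul_im]
  ring

lemma normSq_lt_one {a : ℂ} (ha : a ∈ unitDisc) : normSq a < 1 := by
  have h : ‖a‖ < 1 := by simpa [unitDisc, Complex.dist_eq] using ha
  have := norm_nonneg a
  nlinarith [Complex.sq_norm a]

lemma den_ne_zero {a b : ℂ} (ha : a ∈ unitDisc) (hb : b ∈ unitDisc) :
    (1 : ℂ) - (starRingEnd ℂ) a * b ≠ 0 := by
  intro h
  have h1 := normSq_identity a b
  rw [h, map_zero] at h1
  have h2 : 0 < (1 - normSq a) * (1 - normSq b) :=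
    mul_pos (by linarith [normSq_lt_one ha]) (by linarith [normSq_lt_one hb])
  have := normSq_nonneg (b - a)
  linarith

lemma mobius_lt_one {a b : ℂ} (ha : a ∈ unitDisc) (hb : b ∈ unitDisc) :
    ‖(b - a) / (1 - (starRingEnd ℂ) a * b)‖ < 1 := by
  rw [norm_div, div_lt_one (norm_pos_iff.mpr (den_ne_zero ha hb))]
  have h1 := normSq_identity a b
  have h2 : 0 < (1 - normSq a) * (1 - normSq b) :=
    mul_pos (by linarith [normSq_lt_one ha]) (by linarith [normSq_lt_one hb])
  rw [Complex.norm_def, Complex.norm_def]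
  exact Real.sqrt_lt_sqrt (normSq_nonneg _) (by linarith)

/-- half-plane normSq identity -/
lemma halfplane_identity (w v : ℂ) :
    normSq (w + (starRingEnd ℂ) v) - normSq (w - v) = 4 * w.re * v.re := by
  simp [normSq_apply, Complex.sub_re, Complex.sub_im, Complex.add_re, Complex.add_im]
  ring

/-- the denominator of φ at points of the disc -/
lemma phi_den_ne_zero {a ζ : ℂ} (ha : a ∈ unitDisc) (hζ : ζ ∈ unitDisc) :
    (1 : ℂ) + (starRingEnd ℂ) a * ζ ≠ 0 := by
  have := den_ne_zero ha (show -ζ ∈ unitDisc by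
    simpa [unitDisc, Complex.dist_eq] using hζ)
  intro h; apply this
  rw [mul_neg, sub_neg_eq_add, h]

/-- Schwarz–Pick-type estimate: for `g` holomorphic on the disc with values in the right
half-plane, `|g b - g a| ≤ t |g b + conj (g a)|` where `t` is the pseudo-hyperbolic distance. -/
lemma schwarz_pick_halfplane (g : ℂ → ℂ) (hg : DifferentiableOn ℂ g unitDisc)
    (hpos : ∀ ζ ∈ unitDisc, 0 < (g ζ).re) {a b : ℂ} (ha : a ∈ unitDisc) (hb : b ∈ unitDisc) :
    ‖g b - g a‖ ≤
      ‖(b - a) / (1 - (starRingEnd ℂ) a * b)‖ *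
        ‖g b + (starRingEnd ℂ) (g a)‖ := by
  set h : ℂ → ℂ := fun ζ => (g ζ - g a) / (g ζ + (starRingEnd ℂ) (g a)) with hh
  set φ : ℂ → ℂ := fun ζ => (ζ + a) / (1 + (starRingEnd ℂ) a * ζ) with hφ
  have hden : ∀ ζ ∈ unitDisc, g ζ + (starRingEnd ℂ) (g a) ≠ 0 := by
    intro ζ hζ h0
    have : (g ζ + (starRingEnd ℂ) (g a)).re = (g ζ).re + (g a).re := by
      simp [Complex.add_re, Complex.conj_re]
    rw [h0] at this
    have := hpos ζ hζ; have := hpos a ha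
    simp at *; linarith
  have hhd : DifferentiableOn ℂ h unitDisc := by
    exact ((hg.sub (differentiableOn_const _)).div
      (hg.add (differentiableOn_const _)) hden)
  have hhmaps : MapsTo h unitDisc unitDisc := by
    intro ζ hζ
    have hd := hden ζ hζ
    have key := halfplane_identity (g ζ) (g a)
    have hp : 0 < 4 * (g ζ).re * (g a).re := by
      have := hpos ζ hζ; have := hpos a ha; positivity
    simp only [unitDisc, mem_ball, Complex.dist_eq, sub_zero, hh]
    rw [norm_div, div_lt_one (norm_pos_iff.mpr hd), Complex.norm_def, Complex.norm_def]
    exact Real.sqrt_lt_sqrt (normSq_nonneg _) (by linarith)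
  have hφd : DifferentiableOn ℂ φ unitDisc := by
    apply DifferentiableOn.div
    · exact (differentiableOn_id.add (differentiableOn_const _))
    · exact (differentiableOn_const _).add
        ((differentiableOn_const _).mul differentiableOn_id)
    · intro ζ hζ; exact phi_den_ne_zero ha hζ
  have hφmaps : MapsTo φ unitDisc unitDisc := by
    intro ζ hζ
    have hd := phi_den_ne_zero ha hζ
    have key : normSq (1 + (starRingEnd ℂ) a * ζ) - normSq (ζ + a)
        = (1 - normSq a) * (1 - normSq ζ) := by
      simp [normSq_apply, Complex.add_re, Complex.add_im, Complex.mul_re, Complex.mul_im]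
      ring
    have h2 : 0 < (1 - normSq a) * (1 - normSq ζ) :=
      mul_pos (by linarith [normSq_lt_one ha]) (by linarith [normSq_lt_one hζ])
    simp only [unitDisc, mem_ball, Complex.dist_eq, sub_zero, hφ]
    rw [norm_div, div_lt_one (norm_pos_iff.mpr hd), Complex.norm_def, Complex.norm_def]
    exact Real.sqrt_lt_sqrt (normSq_nonneg _) (by linarith)
  set F : ℂ → ℂ := h ∘ φ with hF
  have hFd : DifferentiableOn ℂ F unitDisc := hhd.comp hφd hφmaps
  have hFmaps : MapsTo F unitDisc unitDisc := hhmaps.comp hφmaps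
  have hφ0 : φ 0 = a := by simp [hφ]
  have hF0 : F 0 = 0 := by
    simp [hF, Function.comp, hφ0, hh]
  set ζ₀ : ℂ := (b - a) / (1 - (starRingEnd ℂ) a * b) with hζ₀
  have hζ₀lt : ‖ζ₀‖ < 1 := mobius_lt_one ha hb
  have hden2 : (1 : ℂ) - (starRingEnd ℂ) a * b ≠ 0 := den_ne_zero ha hb
  have hden3 : (1 : ℂ) + (starRingEnd ℂ) a * ζ₀ ≠ 0 := by
    have heq : (1 : ℂ) + (starRingEnd ℂ) a * ζ₀
        = (1 - (starRingEnd ℂ) a * a) / (1 - (starRingEnd ℂ) a * b) := by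
      rw [hζ₀]; field_simp; ring
    rw [heq]
    apply div_ne_zero _ hden2
    intro h0
    have : (starRingEnd ℂ) a * a = (normSq a : ℂ) := by
      rw [mul_comm, Complex.mul_conj]
    rw [this, sub_eq_zero] at h0
    have := normSq_lt_one ha
    have : (1 : ℝ) = normSq a := by exact_mod_cast h0
    linarith
  have hφζ₀ : φ ζ₀ = b := by
    rw [hφ]
    rw [div_eq_iff hden3, hζ₀]
    linear_combination (b - a) * mul_inv_cancel₀ hden2
  have schwarz : ‖F ζ₀‖ ≤ ‖ζ₀‖ := by
    have : unitDisc = ball (0:ℂ) 1 := rfl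
    exact Complex.norm_le_norm_of_mapsTo_ball
      (by rw [← this]; exact hFd) (fun z hz => ball_subset_closedBall (hFmaps hz)) hF0 hζ₀lt
  have hFζ₀ : F ζ₀ = (g b - g a) / (g b + (starRingEnd ℂ) (g a)) := by
    simp [hF, Function.comp, hφζ₀, hh]
  rw [hFζ₀, norm_div] at schwarz
  have hdb := norm_pos_iff.mpr (hden b hb)
  calc ‖g b - g a‖
      = ‖g b - g a‖ / ‖g b + (starRingEnd ℂ) (g a)‖
        * ‖g b + (starRingEnd ℂ) (g a)‖ := by field_simp
    _ ≤ _ := by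
        apply mul_le_mul_of_nonneg_right schwarz (norm_nonneg _)


/-- pseudo-hyperbolic distance symmetry of abs -/
lemma mobius_abs_symm (a b : ℂ) :
    ‖(b - a) / (1 - (starRingEnd ℂ) a * b)‖
      = ‖(a - b) / (1 - (starRingEnd ℂ) b * a)‖ := by
  rw [norm_div, norm_div, norm_sub_rev]
  congr 1
  have : (1 : ℂ) - (starRingEnd ℂ) b * a = (starRingEnd ℂ) (1 - (starRingEnd ℂ) a * b) := by
    simp [map_sub, map_mul, mul_comm]
  rw [this, Complex.norm_conj]

lemma ratio_est (g : ℂ → ℂ) (hg : DifferentiableOn ℂ g unitDisc)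
    (hpos : ∀ ζ ∈ unitDisc, 0 < (g ζ).re) {a b : ℂ} (ha : a ∈ unitDisc) (hb : b ∈ unitDisc) :
    ‖g b‖ * (1 - ‖(b - a) / (1 - (starRingEnd ℂ) a * b)‖)
      ≤ ‖g a‖ * (1 + ‖(b - a) / (1 - (starRingEnd ℂ) a * b)‖) := by
  set t := ‖(b - a) / (1 - (starRingEnd ℂ) a * b)‖ with ht
  have hsp := schwarz_pick_halfplane g hg hpos ha hb
  have htri : ‖g b + (starRingEnd ℂ) (g a)‖
      ≤ ‖g b‖ + ‖g a‖ := by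
    calc ‖g b + (starRingEnd ℂ) (g a)‖
        ≤ ‖g b‖ + ‖(starRingEnd ℂ) (g a)‖ := norm_add_le _ _
      _ = ‖g b‖ + ‖g a‖ := by rw [Complex.norm_conj]
  have htri2 : ‖g b‖ ≤ ‖g a‖ + ‖g b - g a‖ := by
    calc ‖g b‖ = ‖g a + (g b - g a)‖ := by ring_nf
      _ ≤ _ := norm_add_le _ _
  have ht0 : 0 ≤ t := norm_nonneg _
  nlinarith [norm_nonneg (g b + (starRingEnd ℂ) (g a))]

/-- Core estimate: a holomorphic function into the right half-plane distorts `log |·|`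
by at most twice the Poincaré distance. -/
lemma disc_log_est (g : ℂ → ℂ) (hg : DifferentiableOn ℂ g unitDisc)
    (hpos : ∀ ζ ∈ unitDisc, 0 < (g ζ).re) {a b : ℂ} (ha : a ∈ unitDisc) (hb : b ∈ unitDisc) :
    (1 / 2) * |Real.log (‖g a‖ / ‖g b‖)| ≤ poincareDist a b := by
  set t := ‖(b - a) / (1 - (starRingEnd ℂ) a * b)‖ with ht
  have hpd : poincareDist a b = (1 / 2) * Real.log ((1 + t) / (1 - t)) := by
    rw [poincareDist, ht, mobius_abs_symm]
  have htlt : t < 1 := mobius_lt_one ha hb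
  have ht0 : 0 ≤ t := norm_nonneg _
  have hA : 0 < ‖g a‖ := by
    apply norm_pos_iff.mpr; intro h0
    have := hpos a ha; rw [h0] at this; simp at this
  have hB : 0 < ‖g b‖ := by
    apply norm_pos_iff.mpr; intro h0
    have := hpos b hb; rw [h0] at this; simp at this
  have h1 : ‖g b‖ * (1 - t) ≤ ‖g a‖ * (1 + t) :=
    ratio_est g hg hpos ha hb
  have h2 : ‖g a‖ * (1 - t) ≤ ‖g b‖ * (1 + t) := by
    have := ratio_est g hg hpos hb ha
    rwa [← mobius_abs_symm a b, ← ht] at this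
  rw [hpd]
  rw [mul_le_mul_iff_right₀ (by norm_num : (0:ℝ) < 1/2)]
  rw [abs_le]
  have hq : (0:ℝ) < (1 + t) / (1 - t) := div_pos (by linarith) (by linarith)
  constructor
  · rw [neg_le, ← Real.log_inv]
    apply Real.log_le_log (inv_pos.mpr (div_pos hA hB))
    rw [inv_div, div_le_div_iff₀ hA (by linarith : (0:ℝ) < 1 - t)]
    nlinarith
  · apply Real.log_le_log (div_pos hA hB)
    rw [div_le_div_iff₀ hB (by linarith : (0:ℝ) < 1 - t)]
    nlinarith




end

lemma chain_set_nonempty {F : Type*} [NormedAddCommGroup F] [NormedSpace ℂ F]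
    (Ω : Set F) (hopen : IsOpen Ω) (hconv : Convex ℝ Ω)
    {z₁ z₂ : F} (h1 : z₁ ∈ Ω) (h2 : z₂ ∈ Ω) :
    {r : ℝ | ∃ (m : ℕ) (a b : Fin (m + 1) → ℂ) (f : Fin (m + 1) → ℂ → F),
      (∀ i, a i ∈ unitDisc) ∧ (∀ i, b i ∈ unitDisc) ∧
      (∀ i, DifferentiableOn ℂ (f i) unitDisc) ∧
      (∀ i, MapsTo (f i) unitDisc Ω) ∧
      f 0 (a 0) = z₁ ∧
      (∀ i : Fin m, f i.castSucc (b i.castSucc) = f i.succ (a i.succ)) ∧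
      f (Fin.last m) (b (Fin.last m)) = z₂ ∧
      r = ∑ i, poincareDist (a i) (b i)}.Nonempty := by
  set w : F := z₂ - z₁ with hw
  set μ : ℂ → F := fun ζ => z₁ + ζ • w with hμ
  have hμc : Continuous μ := by fun_prop
  set T : Set ℂ := μ ⁻¹' Ω with hT
  have hTopen : IsOpen T := hopen.preimage hμc
  have hTseg : ∀ s : ℝ, s ∈ Icc (0:ℝ) 1 → ((s:ℂ)) ∈ T := by
    intro s hs
    show z₁ + (s:ℂ) • w ∈ Ω
    have heq : z₁ + (s:ℂ) • w = (1 - s) • z₁ + s • z₂ := by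
      have hs' : (s:ℂ) • w = s • w := by
        rw [← algebraMap_smul ℂ s w]; norm_num
      rw [hs', hw, smul_sub, sub_smul, one_smul]
      abel
    rw [heq]
    exact hconv h1 h2 (by linarith [hs.2]) hs.1 (by ring)
  have hK : IsCompact ((fun s : ℝ => (s:ℂ)) '' Icc 0 1) :=
    isCompact_Icc.image Complex.continuous_ofReal
  have hKT : (fun s : ℝ => (s:ℂ)) '' Icc 0 1 ⊆ T := by
    rintro _ ⟨s, hs, rfl⟩; exact hTseg s hs
  obtain ⟨ε, hε, hthick⟩ := hK.exists_thickening_subset_open hTopen hKT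
  obtain ⟨n, hnpos, hnε⟩ : ∃ n : ℕ, 0 < n ∧ 1 < (n:ℝ) * ε := by
    refine ⟨⌊1/ε⌋₊ + 1, Nat.succ_pos _, ?_⟩
    have h1n : 1/ε < ((⌊1/ε⌋₊ + 1 : ℕ):ℝ) := by push_cast; exact Nat.lt_floor_add_one _
    rw [div_lt_iff₀ hε] at h1n; linarith
  have hn0 : (0:ℝ) < n := by exact_mod_cast hnpos
  have hnε0 : (0:ℝ) < n * ε := by positivity
  set m : ℕ := n - 1 with hm
  have hmn : m + 1 = n := by omega
  set bb : ℂ := ((1/(n*ε) : ℝ) : ℂ) with hbb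
  set f : Fin (m+1) → ℂ → F := fun i ζ => z₁ + ((((i:ℕ):ℂ))/(n:ℂ) + ((ε:ℝ):ℂ) * ζ) • w
    with hf
  have hbbd : bb ∈ unitDisc := by
    simp only [unitDisc, mem_ball, Complex.dist_eq, sub_zero, hbb, Complex.norm_real, Real.norm_eq_abs]
    rw [abs_of_nonneg (by positivity), div_lt_one hnε0]
    linarith
  have h0d : (0:ℂ) ∈ unitDisc := by simp [unitDisc]
  have hmaps : ∀ i : Fin (m+1), MapsTo (f i) unitDisc Ω := by
    intro i ζ hζ
    have hin : ((i:ℕ):ℝ)/n ∈ Icc (0:ℝ) 1 := by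
      constructor
      · positivity
      · rw [div_le_one hn0]
        have : (i:ℕ) ≤ m := Nat.lt_succ_iff.mp i.isLt
        have : ((i:ℕ):ℝ) ≤ m := by exact_mod_cast this
        have hmlt : (m:ℝ) ≤ n := by exact_mod_cast (by omega : m ≤ n)
        linarith
    have hmem : (((i:ℕ):ℂ))/(n:ℂ) + ((ε:ℝ):ℂ) * ζ ∈ Metric.thickening ε
        ((fun s : ℝ => (s:ℂ)) '' Icc 0 1) := by
      rw [Metric.mem_thickening_iff]
      refine ⟨((((i:ℕ):ℝ)/n : ℝ):ℂ), ⟨_, hin, rfl⟩, ?_⟩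
      have hcast : ((((i:ℕ):ℝ)/n : ℝ):ℂ) = (((i:ℕ):ℂ))/(n:ℂ) := by push_cast; ring
      rw [hcast, Complex.dist_eq]
      have hζ1 : ‖ζ‖ < 1 := by
        simpa [unitDisc, Complex.dist_eq] using hζ
      calc ‖(((i:ℕ):ℂ))/(n:ℂ) + ((ε:ℝ):ℂ) * ζ - (((i:ℕ):ℂ))/(n:ℂ)‖
          = ‖((ε:ℝ):ℂ) * ζ‖ := by ring_nf
        _ = ε * ‖ζ‖ := by
            rw [norm_mul, Complex.norm_real, Real.norm_eq_abs, abs_of_pos hε]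
        _ < ε * 1 := by exact mul_lt_mul_of_pos_left hζ1 hε
        _ = ε := mul_one ε
    have := hthick hmem
    exact this
  refine ⟨∑ i : Fin (m+1), poincareDist 0 bb, m, fun _ => 0, fun _ => bb, f,
    fun _ => h0d, fun _ => hbbd, ?_, hmaps, ?_, ?_, ?_, rfl⟩
  · intro i
    apply DifferentiableOn.add (differentiableOn_const _)
    apply Differentiable.differentiableOn
    exact (((differentiable_const _).add ((differentiable_const _).mul
      differentiable_id)).smul_const w)
  · show z₁ + ((((0:ℕ):ℂ))/(n:ℂ) + ((ε:ℝ):ℂ) * 0) • w = z₁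
    norm_num
  · intro i
    show z₁ + _ • w = z₁ + _ • w
    congr 1
    have hεne : ((ε:ℝ):ℂ) ≠ 0 := Complex.ofReal_ne_zero.mpr (ne_of_gt hε)
    have hnne : ((n:ℕ):ℂ) ≠ 0 := Nat.cast_ne_zero.mpr (by omega)
    have hbbc : ((ε:ℝ):ℂ) * bb = 1/((n:ℕ):ℂ) := by
      rw [hbb]; push_cast; field_simp; try ring
    congr 1
    rw [hbbc]
    push_cast [Fin.coe_castSucc, Fin.val_succ]
    field_simp
    try ring
  · show z₁ + ((((Fin.last m : Fin (m+1)):ℕ):ℂ)/(n:ℂ) + ((ε:ℝ):ℂ) * bb) • w = z₂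
    have hnne : ((n:ℕ):ℂ) ≠ 0 := Nat.cast_ne_zero.mpr (by omega)
    have hεne : ((ε:ℝ):ℂ) ≠ 0 := Complex.ofReal_ne_zero.mpr (ne_of_gt hε)
    have hbbc : ((ε:ℝ):ℂ) * bb = 1/((n:ℕ):ℂ) := by
      rw [hbb]; push_cast; field_simp; try ring
    have hsc : (((Fin.last m : Fin (m+1)):ℕ):ℂ)/(n:ℂ) + ((ε:ℝ):ℂ) * bb = 1 := by
      rw [hbbc, Fin.val_last]
      have hmc : ((m:ℕ):ℂ) = ((n:ℕ):ℂ) - 1 := by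
        have h := congrArg (Nat.cast : ℕ → ℂ) hmn
        push_cast at h
        linear_combination h
      rw [hmc]
      field_simp
      ring
    rw [hsc, one_smul, hw]
    abel


end Stmt13Aux

theorem stmt_13 (d : ℕ) (hd : 1 ≤ d) (Ω : Set (Eucl d)) (hΩ : IsConvexDomain d Ω)
    (P : Eucl d →ᵃ[ℂ] ℂ) (hP : P.linear ≠ 0)
    (H : Set (Eucl d)) (hH : H = P ⁻¹' {0}) (hHΩ : H ∩ Ω = ∅) :
    ∀ z₁ ∈ Ω, ∀ z₂ ∈ Ω,
      (1 / 2) * |Real.log (‖P z₁‖ / ‖P z₂‖)| ≤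
        kobayashiDist Ω z₁ z₂ := by
  obtain ⟨hne, hopen, hconv⟩ := hΩ
  have hfun : ∀ z, P z = P.linear z + P 0 := fun z => by
    conv_lhs => rw [AffineMap.decomp P]
    rfl
  have hcoe : ⇑(LinearMap.toContinuousLinearMap P.linear) = ⇑P.linear := by
    ext z; simp
  have hLd : Differentiable ℂ (⇑P.linear) := by
    have h := (LinearMap.toContinuousLinearMap P.linear).differentiable
    rwa [hcoe] at h
  have hPd : Differentiable ℂ (⇑P) := by
    rw [AffineMap.decomp P]
    exact hLd.add (differentiable_const _)
  have hPne : ∀ z ∈ Ω, P z ≠ 0 := by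
    intro z hz h0
    have hmem : z ∈ H ∩ Ω := ⟨by rw [hH]; simpa using h0, hz⟩
    rw [hHΩ] at hmem; exact hmem
  have hsurj : Function.Surjective (⇑P.linear) := by
    obtain ⟨v, hv⟩ : ∃ v, P.linear v ≠ 0 := by
      by_contra hcon; push_neg at hcon
      exact hP (LinearMap.ext fun v => by simp [hcon v])
    intro c
    exact ⟨(c / P.linear v) • v, by rw [map_smul, smul_eq_mul, div_mul_cancel₀ _ hv]⟩
  have hLopen : IsOpenMap (⇑P.linear) := by
    have h := (LinearMap.toContinuousLinearMap P.linear).isOpenMap (by rw [hcoe]; exact hsurj)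
    rwa [hcoe] at h
  have himg : ⇑P '' Ω = (fun c => c + P 0) '' (⇑P.linear '' Ω) := by
    rw [← Set.image_comp]
    exact Set.image_congr fun z _ => hfun z
  have himg_open : IsOpen (⇑P '' Ω) := by
    rw [himg]; exact isOpenMap_add_right (P 0) _ (hLopen Ω hopen)
  have himg_conv : Convex ℝ (⇑P '' Ω) := by
    rintro _ ⟨u, hu, rfl⟩ _ ⟨x, hx, rfl⟩ s t hs ht hst
    refine ⟨s • u + t • x, hconv hu hx hs ht hst, ?_⟩
    rw [hfun (s • u + t • x), map_add, LinearMap.map_smul_of_tower,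
      LinearMap.map_smul_of_tower, hfun u, hfun x, smul_add, smul_add]
    have hP0 : s • (P 0) + t • (P 0) = P 0 := by rw [← add_smul, hst, one_smul]
    conv_lhs => rw [← hP0]
    abel
  have h0notin : (0:ℂ) ∉ ⇑P '' Ω := by
    rintro ⟨z, hz, h0⟩; exact hPne z hz h0
  obtain ⟨l, hl⟩ := geometric_hahn_banach_open_point himg_conv himg_open h0notin
  have hl0 : ∀ z ∈ Ω, l (P z) < 0 := by
    intro z hz
    have := hl (P z) ⟨z, hz, rfl⟩
    simpa using this
  set q : ℂ := Complex.I * ((l Complex.I : ℝ) : ℂ) - ((l 1 : ℝ) : ℂ) with hqdef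
  have hlw : ∀ c : ℂ, (q * c).re = - l c := by
    intro c
    have hc : l c = c.re * l 1 + c.im * l Complex.I := by
      have hc1 : c = c.re • (1:ℂ) + c.im • Complex.I := by
        simp [Complex.real_smul, Complex.re_add_im]
      conv_lhs => rw [hc1]
      rw [map_add, map_smul, map_smul, smul_eq_mul, smul_eq_mul]
    rw [hc, hqdef]
    simp only [Complex.mul_re, Complex.sub_re, Complex.sub_im, Complex.mul_im,
      Complex.I_re, Complex.I_im, Complex.ofReal_re, Complex.ofReal_im]
    ring
  have hq : ∀ z ∈ Ω, 0 < (q * P z).re := by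
    intro z hz; rw [hlw]; linarith [hl0 z hz]
  have hqne : q ≠ 0 := by
    obtain ⟨z0, hz0⟩ := hne
    intro h0
    have := hq z0 hz0
    rw [h0, zero_mul] at this; simp at this
  intro z₁ hz₁ z₂ hz₂
  unfold kobayashiDist
  apply le_csInf (Stmt13Aux.chain_set_nonempty Ω hopen hconv hz₁ hz₂)
  rintro r ⟨m, a, b, f, ha, hb, hfd, hfm, hf0, hchain, hlastb, hsum⟩
  have habsne : ∀ x ∈ Ω, ‖P x‖ ≠ 0 := fun x hx =>
    norm_ne_zero_iff.mpr (hPne x hx)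
  have key : ∀ i : Fin (m+1),
      (1/2) * |Real.log (‖P (f i (a i))‖ / ‖P (f i (b i))‖)|
        ≤ poincareDist (a i) (b i) := by
    intro i
    have hgd : DifferentiableOn ℂ (fun ζ => q * P (f i ζ)) unitDisc :=
      (hPd.const_mul q).comp_differentiableOn (hfd i)
    have hgpos : ∀ ζ ∈ unitDisc, 0 < ((fun ζ => q * P (f i ζ)) ζ).re :=
      fun ζ hζ => hq _ (hfm i hζ)
    have hest := Stmt13Aux.disc_log_est _ hgd hgpos (ha i) (hb i)
    have hratio : ‖q * P (f i (a i))‖ / ‖q * P (f i (b i))‖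
        = ‖P (f i (a i))‖ / ‖P (f i (b i))‖ := by
      rw [norm_mul, norm_mul, mul_div_mul_left _ _ (norm_ne_zero_iff.mpr hqne)]
    rwa [hratio] at hest
  set v : ℕ → ℝ := fun k =>
    if h : k < m + 1 then Real.log (‖P (f ⟨k, h⟩ (a ⟨k, h⟩))‖)
    else Real.log (‖P z₂‖) with hv
  have hterm : ∀ i : Fin (m+1),
      v i - v ((i:ℕ) + 1) =
        Real.log (‖P (f i (a i))‖) - Real.log (‖P (f i (b i))‖) := by
    intro i
    have hvi : v i = Real.log (‖P (f i (a i))‖) := by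
      rw [hv]; simp only [i.isLt, dif_pos, Fin.eta]
    have hvi1 : v ((i:ℕ) + 1) = Real.log (‖P (f i (b i))‖) := by
      by_cases hlt : (i:ℕ) + 1 < m + 1
      · have him : (i:ℕ) < m := by omega
        rw [hv]; simp only [hlt, dif_pos]
        have hcs : (⟨(i:ℕ), him⟩ : Fin m).castSucc = i := by
          ext; simp
        have hsc : ((⟨(i:ℕ), him⟩ : Fin m).succ : Fin (m+1)) = ⟨(i:ℕ)+1, hlt⟩ := by
          ext; simp
        rw [← hsc, ← hchain ⟨(i:ℕ), him⟩, hcs]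
      · have hi : i = Fin.last m := by
          ext; simp only [Fin.val_last]; omega
        rw [hv]; simp only [hlt, dif_neg, not_false_iff]
        rw [hi, ← hlastb]
    rw [hvi, hvi1]
  have htel : Real.log (‖P z₁‖) - Real.log (‖P z₂‖)
      = ∑ i : Fin (m+1),
        (Real.log (‖P (f i (a i))‖) - Real.log (‖P (f i (b i))‖)) := by
    have h1 : ∑ i : Fin (m+1), (v (i:ℕ) - v ((i:ℕ)+1)) = v 0 - v (m+1) := by
      rw [Fin.sum_univ_eq_sum_range (fun k => v k - v (k+1)) (m+1)]
      exact Finset.sum_range_sub' v (m+1)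
    have hv0 : v 0 = Real.log (‖P z₁‖) := by
      rw [hv]; simp only [Nat.succ_pos, dif_pos]
      rw [show (⟨0, Nat.succ_pos m⟩ : Fin (m+1)) = 0 from rfl, hf0]
    have hvm : v (m+1) = Real.log (‖P z₂‖) := by
      rw [hv]; simp
    calc Real.log (‖P z₁‖) - Real.log (‖P z₂‖)
        = v 0 - v (m+1) := by rw [hv0, hvm]
      _ = ∑ i : Fin (m+1), (v (i:ℕ) - v ((i:ℕ)+1)) := h1.symm
      _ = _ := Finset.sum_congr rfl fun i _ => hterm i
  have hlogdiv : Real.log (‖P z₁‖ / ‖P z₂‖)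
      = Real.log (‖P z₁‖) - Real.log (‖P z₂‖) :=
    Real.log_div (habsne z₁ hz₁) (habsne z₂ hz₂)
  calc (1/2) * |Real.log (‖P z₁‖ / ‖P z₂‖)|
      = (1/2) * |∑ i : Fin (m+1),
          (Real.log (‖P (f i (a i))‖) - Real.log (‖P (f i (b i))‖))| := by
        rw [hlogdiv, htel]
    _ ≤ (1/2) * ∑ i : Fin (m+1),
          |Real.log (‖P (f i (a i))‖) - Real.log (‖P (f i (b i))‖)| := by
        apply mul_le_mul_of_nonneg_left (Finset.abs_sum_le_sum_abs _ _) (by norm_num)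
    _ = ∑ i : Fin (m+1), (1/2) *
          |Real.log (‖P (f i (a i))‖) - Real.log (‖P (f i (b i))‖)| := by
        rw [Finset.mul_sum]
    _ ≤ ∑ i : Fin (m+1), poincareDist (a i) (b i) := by
        apply Finset.sum_le_sum
        intro i _
        have hd := Real.log_div (habsne _ (hfm i (ha i))) (habsne _ (hfm i (hb i)))
        rw [← hd]
        exact key i
    _ = r := hsum.symm
end
end

section
/- Suppose Ω ⊆ ℂ^d is a convex domain, x, y ∈ Ω, L is a complex affine line containing x and y, and ξ ∈ L with ξ ∉ Ω. Then (1/2)·| log( ‖x−ξ‖ / ‖y−ξ‖ ) | ≤ K_Ω(x, y), where ‖·‖ is the Euclidean norm. -/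
open Set Metric Filter Asymptotics

noncomputable section

lemma abs_lt_abs_of_normSq (u v : ℂ) (h : Complex.normSq u < Complex.normSq v) :
    ‖u‖ < ‖v‖ := by
  rw [Complex.norm_def, Complex.norm_def]
  exact Real.sqrt_lt_sqrt (Complex.normSq_nonneg u) h

lemma normSq_lt_one (a : ℂ) (h : ‖a‖ < 1) : Complex.normSq a < 1 := by
  rw [← Complex.sq_norm]
  nlinarith [norm_nonneg a]

lemma normSq_key (p q : ℂ) : Complex.normSq (q + (starRingEnd ℂ) p) - Complex.normSq (q - p) = 4 * p.re * q.re := by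
  simp [Complex.normSq_apply, Complex.sub_re, Complex.sub_im, Complex.add_re, Complex.add_im,
    Complex.conj_re, Complex.conj_im]
  ring

lemma normSq_key2 (a b : ℂ) : Complex.normSq (1 - (starRingEnd ℂ) a * b) - Complex.normSq (b - a) = (1 - Complex.normSq a) * (1 - Complex.normSq b) := by
  simp [Complex.normSq_apply, Complex.sub_re, Complex.sub_im, Complex.add_re, Complex.add_im,
    Complex.mul_re, Complex.mul_im, Complex.conj_re, Complex.conj_im]
  ring

lemma normSq_key3 (a ζ : ℂ) : Complex.normSq (1 + (starRingEnd ℂ) a * ζ) - Complex.normSq (ζ + a) = (1 - Complex.normSq a) * (1 - Complex.normSq ζ) := by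
  simp [Complex.normSq_apply, Complex.sub_re, Complex.sub_im, Complex.add_re, Complex.add_im,
    Complex.mul_re, Complex.mul_im, Complex.conj_re, Complex.conj_im]
  ring

lemma halfplane_ratio (p q : ℂ) (hp : 0 < p.re) (hq : 0 < q.re) (t : ℝ) (ht : t < 1)
    (h : ‖(q - p) / (q + (starRingEnd ℂ) p)‖ ≤ t) :
    |Real.log (‖q‖) - Real.log (‖p‖)| ≤ Real.log ((1 + t) / (1 - t)) := by
  have hpne : p ≠ 0 := fun hp0 => by simp [hp0] at hp
  have hqne : q ≠ 0 := fun hq0 => by simp [hq0] at hq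
  have hdne : q + (starRingEnd ℂ) p ≠ 0 := by
    intro h0
    have : (q + (starRingEnd ℂ) p).re = 0 := by rw [h0]; simp
    simp [Complex.add_re, Complex.conj_re] at this
    linarith
  have ht0 : 0 ≤ t := le_trans (norm_nonneg _) h
  have hA : 0 < ‖q‖ := norm_pos_iff.mpr hqne
  have hB : 0 < ‖p‖ := norm_pos_iff.mpr hpne
  have hd : ‖q - p‖ ≤ t * ‖q + (starRingEnd ℂ) p‖ := by
    rw [norm_div] at h
    have := norm_pos_iff.mpr hdne
    calc ‖q - p‖ = ‖q - p‖ / ‖q + (starRingEnd ℂ) p‖ * ‖q + (starRingEnd ℂ) p‖ := by field_simp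
    _ ≤ t * ‖q + (starRingEnd ℂ) p‖ := by
        apply mul_le_mul_of_nonneg_right h this.le
  have htri : ‖q + (starRingEnd ℂ) p‖ ≤ ‖q‖ + ‖p‖ := by
    calc ‖q + (starRingEnd ℂ) p‖ ≤ ‖q‖ + ‖(starRingEnd ℂ) p‖ := norm_add_le _ _
    _ = ‖q‖ + ‖p‖ := by rw [Complex.norm_conj]
  have hd' : ‖q - p‖ ≤ t * (‖q‖ + ‖p‖) :=
    le_trans hd (mul_le_mul_of_nonneg_left htri ht0)
  have h12 := abs_norm_sub_norm_le q p
  have h1 : ‖q‖ - ‖p‖ ≤ ‖q - p‖ := by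
    have := le_abs_self (‖q‖ - ‖p‖); linarith
  have h2 : ‖p‖ - ‖q‖ ≤ ‖q - p‖ := by
    have := neg_abs_le (‖q‖ - ‖p‖); linarith
  set A := ‖q‖
  set B := ‖p‖
  have hup : A / B ≤ (1 + t) / (1 - t) := by
    rw [div_le_div_iff₀ hB (by linarith)]
    nlinarith
  have hlo : B / A ≤ (1 + t) / (1 - t) := by
    rw [div_le_div_iff₀ hA (by linarith)]
    nlinarith
  have hM : Real.log (A / B) ≤ Real.log ((1 + t) / (1 - t)) :=
    Real.log_le_log (by positivity) hup
  have hM' : Real.log (B / A) ≤ Real.log ((1 + t) / (1 - t)) :=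
    Real.log_le_log (by positivity) hlo
  rw [Real.log_div hA.ne' hB.ne'] at hM
  rw [Real.log_div hB.ne' hA.ne'] at hM'
  rw [abs_le]
  constructor <;> linarith

lemma disc_log (g : ℂ → ℂ) (hg : DifferentiableOn ℂ g (ball 0 1))
    (hre : ∀ ζ ∈ ball (0:ℂ) 1, 0 < (g ζ).re) (w : ℂ) (hw : ‖w‖ < 1) :
    |Real.log (‖g w‖) - Real.log (‖g 0‖)| ≤
      Real.log ((1 + ‖w‖) / (1 - ‖w‖)) := by
  have h0 : (0:ℂ) ∈ ball (0:ℂ) 1 := by simp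
  have hwball : w ∈ ball (0:ℂ) 1 := by
    simpa [mem_ball, Complex.dist_eq] using hw
  have hpre : 0 < (g 0).re := hre 0 h0
  have hdenom : ∀ ζ ∈ ball (0:ℂ) 1, g ζ + (starRingEnd ℂ) (g 0) ≠ 0 := by
    intro ζ hζ h0'
    have hre0 : (g ζ + (starRingEnd ℂ) (g 0)).re = 0 := by rw [h0']; simp
    simp [Complex.add_re, Complex.conj_re] at hre0
    have := hre ζ hζ; linarith
  set F : ℂ → ℂ := fun ζ => (g ζ - g 0) / (g ζ + (starRingEnd ℂ) (g 0)) with hF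
  have hFd : DifferentiableOn ℂ F (ball 0 1) :=
    DifferentiableOn.div (hg.sub (differentiableOn_const _))
      (hg.add (differentiableOn_const _)) hdenom
  have hFmaps : MapsTo F (ball (0:ℂ) 1) (ball (0:ℂ) 1) := by
    intro ζ hζ
    have hq := hre ζ hζ
    have hlt : ‖g ζ - g 0‖ < ‖g ζ + (starRingEnd ℂ) (g 0)‖ := by
      apply abs_lt_abs_of_normSq
      nlinarith [normSq_key (g 0) (g ζ)]
    have hpos : 0 < ‖g ζ + (starRingEnd ℂ) (g 0)‖ := norm_pos_iff.mpr (hdenom ζ hζ)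
    rw [mem_ball_zero_iff, hF]
    simp only [norm_div]
    rw [div_lt_one hpos]
    exact hlt
  have hF0 : F 0 = 0 := by simp [hF]
  have hSchwarz : ‖F w‖ ≤ ‖w‖ :=
    Complex.norm_le_norm_of_mapsTo_ball hFd (hFmaps.mono_right ball_subset_closedBall) hF0 hw
  exact halfplane_ratio (g 0) (g w) hpre (hre w hwball) (‖w‖) hw hSchwarz

lemma disc_pair (g : ℂ → ℂ) (hg : DifferentiableOn ℂ g (ball 0 1))
    (hre : ∀ ζ ∈ ball (0:ℂ) 1, 0 < (g ζ).re) (a b : ℂ)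
    (ha : ‖a‖ < 1) (hb : ‖b‖ < 1) :
    |Real.log (‖g a‖) - Real.log (‖g b‖)| ≤ 2 * poincareDist a b := by
  have hden : (1 : ℂ) - (starRingEnd ℂ) a * b ≠ 0 := by
    intro h0
    have h1 : ‖(starRingEnd ℂ) a * b‖ < 1 := by
      rw [norm_mul, Complex.norm_conj]
      nlinarith [norm_nonneg a, norm_nonneg b]
    have : (starRingEnd ℂ) a * b = 1 := by linear_combination -h0
    rw [this] at h1; simp at h1
  set w : ℂ := (b - a) / (1 - (starRingEnd ℂ) a * b) with hwdef
  have hwlt : ‖w‖ < 1 := by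
    rw [hwdef, norm_div, div_lt_one (norm_pos_iff.mpr hden)]
    apply abs_lt_abs_of_normSq
    nlinarith [normSq_key2 a b, normSq_lt_one a ha, normSq_lt_one b hb,
      Complex.normSq_nonneg a, Complex.normSq_nonneg b]
  set μ : ℂ → ℂ := fun ζ => (ζ + a) / (1 + (starRingEnd ℂ) a * ζ) with hμdef
  have hμden : ∀ ζ ∈ ball (0:ℂ) 1, (1 : ℂ) + (starRingEnd ℂ) a * ζ ≠ 0 := by
    intro ζ hζ h0
    rw [mem_ball_zero_iff] at hζ
    have h1 : ‖(starRingEnd ℂ) a * ζ‖ < 1 := by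
      rw [norm_mul, Complex.norm_conj]
      nlinarith [norm_nonneg a, norm_nonneg ζ]
    have : (starRingEnd ℂ) a * ζ = -1 := by linear_combination h0
    rw [this] at h1; simp at h1
  have hμd : DifferentiableOn ℂ μ (ball 0 1) :=
    DifferentiableOn.div (differentiableOn_id.add (differentiableOn_const _))
      ((differentiableOn_const _).add ((differentiableOn_const _).mul differentiableOn_id)) hμden
  have hμmaps : MapsTo μ (ball (0:ℂ) 1) (ball (0:ℂ) 1) := by
    intro ζ hζ
    have hζ' : ‖ζ‖ < 1 := by rwa [mem_ball_zero_iff] at hζ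
    rw [mem_ball_zero_iff, hμdef]
    simp only [norm_div]
    rw [div_lt_one (norm_pos_iff.mpr (hμden ζ hζ))]
    apply abs_lt_abs_of_normSq
    nlinarith [normSq_key3 a ζ, normSq_lt_one a ha, normSq_lt_one ζ hζ',
      Complex.normSq_nonneg a, Complex.normSq_nonneg ζ]
  have hμ0 : μ 0 = a := by simp [hμdef]
  have hwball : w ∈ ball (0:ℂ) 1 := by rwa [mem_ball_zero_iff]
  have hμw : μ w = b := by
    have h2 : (1:ℂ) + (starRingEnd ℂ) a * w ≠ 0 := hμden w hwball
    show (w + a) / (1 + (starRingEnd ℂ) a * w) = b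
    rw [div_eq_iff h2, hwdef]
    linear_combination (div_mul_cancel₀ (b - a) hden)
  have hcomp : DifferentiableOn ℂ (g ∘ μ) (ball 0 1) := hg.comp hμd hμmaps
  have hcre : ∀ ζ ∈ ball (0:ℂ) 1, 0 < ((g ∘ μ) ζ).re := fun ζ hζ => hre (μ ζ) (hμmaps hζ)
  have key := disc_log (g ∘ μ) hcomp hcre w hwlt
  rw [Function.comp_apply, Function.comp_apply, hμ0, hμw] at key
  have hr : ‖(a - b) / (1 - (starRingEnd ℂ) b * a)‖ = ‖w‖ := by
    rw [hwdef, norm_div, norm_div, norm_sub_rev a b]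
    congr 1
    rw [← Complex.norm_conj (1 - (starRingEnd ℂ) b * a)]
    congr 1
    simp [map_sub, map_mul, mul_comm]
  have h2pd : 2 * poincareDist a b = Real.log ((1 + ‖w‖) / (1 - ‖w‖)) := by
    unfold poincareDist
    rw [hr]; ring
  rw [h2pd]
  rwa [abs_sub_comm] at key

lemma fin_telescope : ∀ (m : ℕ) (u w : Fin (m + 1) → ℝ),
    (∀ i : Fin m, w i.castSucc = u i.succ) →
    |u 0 - w (Fin.last m)| ≤ ∑ i, |u i - w i| := by
  intro m
  induction m with
  | zero =>
    intro u w _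
    simp [Fin.last]
  | succ m ih =>
    intro u w hlink
    have hih := ih (u ∘ Fin.castSucc) (w ∘ Fin.castSucc) (fun i => by
      simp only [Function.comp_apply]
      rw [← Fin.succ_castSucc]
      exact hlink i.castSucc)
    have hlast : w ((Fin.last m).castSucc) = u (Fin.last (m + 1)) := by
      rw [hlink (Fin.last m), Fin.succ_last]
    calc |u 0 - w (Fin.last (m + 1))|
        ≤ |u 0 - w ((Fin.last m).castSucc)| + |u (Fin.last (m+1)) - w (Fin.last (m+1))| := by
          rw [hlast]
          exact abs_sub_le _ _ _
      _ ≤ (∑ i : Fin (m+1), |u i.castSucc - w i.castSucc|) + |u (Fin.last (m+1)) - w (Fin.last (m+1))| := by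
          have h0 : ((0 : Fin (m+1)).castSucc) = (0 : Fin (m+2)) := rfl
          have := hih
          simp only [Function.comp_apply] at this
          rw [h0] at this
          linarith
      _ = ∑ i : Fin (m+2), |u i - w i| := (Fin.sum_univ_castSucc (fun i => |u i - w i|)).symm

lemma ratio_bound_aux (d : ℕ) (Ω : Set (Eucl d)) (hopen : IsOpen Ω) (hconv : Convex ℝ Ω)
    (x y : Eucl d) (hx : x ∈ Ω) (hy : y ∈ Ω) :
    Set.Nonempty {r : ℝ | ∃ (m : ℕ) (a b : Fin (m + 1) → ℂ) (f : Fin (m + 1) → ℂ → Eucl d),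
      (∀ i, a i ∈ unitDisc) ∧ (∀ i, b i ∈ unitDisc) ∧
      (∀ i, DifferentiableOn ℂ (f i) unitDisc) ∧
      (∀ i, Set.MapsTo (f i) unitDisc Ω) ∧
      f 0 (a 0) = x ∧
      (∀ i : Fin m, f i.castSucc (b i.castSucc) = f i.succ (a i.succ)) ∧
      f (Fin.last m) (b (Fin.last m)) = y ∧
      r = ∑ i, poincareDist (a i) (b i)} := by
  have hsub : segment ℝ x y ⊆ Ω := hconv.segment_subset hx hy
  have hseg : IsCompact (segment ℝ x y) := by
    rw [segment_eq_image']
    exact isCompact_Icc.image (by fun_prop)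
  obtain ⟨ε, hε, hthick⟩ := hseg.exists_thickening_subset_open hopen hsub
  obtain ⟨n, hn⟩ := exists_nat_gt (2 * ‖y - x‖ / ε)
  have hn' : 2 * ‖y - x‖ < ((n : ℝ) + 1) * ε := by
    rw [div_lt_iff₀ hε] at hn
    nlinarith
  have hcne : ((n : ℂ) + 1) ≠ 0 := by
    have h1 : ((n + 1 : ℕ) : ℂ) ≠ 0 := Nat.cast_ne_zero.mpr (Nat.succ_ne_zero n)
    push_cast at h1
    exact h1
  have hcr : (0 : ℝ) < (n : ℝ) + 1 := by positivity
  refine ⟨∑ i : Fin (n + 1), poincareDist 0 (1/2), n, (fun _ => 0), (fun _ => 1/2),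
    (fun i ζ => x + ((((i : ℕ) : ℂ) + 2 * ζ) / ((n : ℂ) + 1)) • (y - x)),
    ?_, ?_, ?_, ?_, ?_, ?_, ?_, rfl⟩
  · intro i; show (0 : ℂ) ∈ ball (0 : ℂ) 1; simp
  · intro i; show (1/2 : ℂ) ∈ ball (0 : ℂ) 1
    rw [mem_ball_zero_iff]
    norm_num
  · intro i
    apply Differentiable.differentiableOn
    apply Differentiable.const_add
    apply Differentiable.smul_const
    apply Differentiable.div_const
    exact (differentiable_const _).add ((differentiable_id).const_mul 2)
  · intro i ζ hζ
    have hζ' : ‖ζ‖ < 1 := by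
      rw [show unitDisc = ball (0:ℂ) 1 from rfl, mem_ball_zero_iff] at hζ
      exact hζ
    set t : ℝ := (i : ℕ) / ((n : ℝ) + 1) with ht
    have hzseg : x + t • (y - x) ∈ segment ℝ x y := by
      rw [segment_eq_image']
      refine ⟨t, ⟨by positivity, ?_⟩, rfl⟩
      rw [ht, div_le_one hcr]
      have : (i : ℕ) ≤ n := Nat.lt_succ_iff.mp i.isLt
      exact_mod_cast Nat.le_succ_of_le this
    apply hthick
    apply ball_subset_thickening hzseg ε
    rw [mem_ball, dist_eq_norm]
    have hts : t • (y - x) = (((i : ℕ) : ℂ) / ((n : ℂ) + 1)) • (y - x) := by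
      rw [← algebraMap_smul ℂ t (y - x)]
      congr 1
      rw [ht]
      push_cast
      rfl
    have hkey : ((((i : ℕ) : ℂ) + 2 * ζ) / ((n : ℂ) + 1)) - (((i : ℕ) : ℂ) / ((n : ℂ) + 1))
        = (2 * ζ) / ((n : ℂ) + 1) := by ring
    have hdiff : x + ((((i : ℕ) : ℂ) + 2 * ζ) / ((n : ℂ) + 1)) • (y - x) - (x + t • (y - x))
        = ((2 * ζ) / ((n : ℂ) + 1)) • (y - x) := by
      rw [hts, ← hkey, sub_smul]
      abel
    rw [hdiff, norm_smul, norm_div, norm_mul]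
    have habs2 : ‖(2:ℂ)‖ = 2 := by norm_num
    have habsn : ‖(n : ℂ) + 1‖ = (n : ℝ) + 1 := by
      rw [show ((n : ℂ) + 1) = ((n + 1 : ℕ) : ℂ) by push_cast; ring, Complex.norm_natCast]
      push_cast; ring
    rw [habs2, habsn, div_mul_eq_mul_div, div_lt_iff₀ hcr]
    nlinarith [norm_nonneg (y - x), norm_nonneg ζ]
  · simp
  · intro i
    simp only
    congr 2
    rw [Fin.coe_castSucc, Fin.val_succ]
    push_cast
    field_simp
    ring
  · simp only
    rw [show (((Fin.last n : Fin (n+1)) : ℕ) : ℂ) = (n : ℂ) from by rw [Fin.val_last],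
      show ((n : ℂ) + 2 * (1/2)) / ((n : ℂ) + 1) = 1 from by field_simp, one_smul]
    abel

set_option maxHeartbeats 1000000 in
theorem stmt_14 (d : ℕ) (hd : 1 ≤ d) (Ω : Set (Eucl d)) (hΩ : IsConvexDomain d Ω)
    (x y : Eucl d) (hx : x ∈ Ω) (hy : y ∈ Ω)
    (L : ℂ →ᵃ[ℂ] Eucl d) (hL : Function.Injective L)
    (hxL : x ∈ Set.range L) (hyL : y ∈ Set.range L)
    (ξ : Eucl d) (hξL : ξ ∈ Set.range L) (hξ : ξ ∉ Ω) :
    (1 / 2) * |Real.log (‖x - ξ‖ / ‖y - ξ‖)| ≤ kobayashiDist Ω x y := by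
  obtain ⟨-, hopen, hconv⟩ := hΩ
  obtain ⟨p, hp⟩ := hxL
  obtain ⟨q, hq⟩ := hyL
  obtain ⟨s, hs⟩ := hξL
  obtain ⟨fr, hfr⟩ := geometric_hahn_banach_open_point hconv hopen hξ
  set ℓ : Eucl d →L[ℂ] ℂ := ContinuousLinearMap.extendTo𝕜' fr with hℓ
  have hre_l : ∀ z : Eucl d, (ℓ z).re = fr z := by
    intro z
    rw [hℓ]
    show ((StrongDual.extendRCLike (𝕜 := ℂ) fr : Eucl d →L[ℂ] ℂ) z).re = fr z
    rw [StrongDual.extendRCLike_apply]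
    simp
  set σ : Eucl d → ℂ := fun z => ℓ ξ - ℓ z with hσ
  have hσre : ∀ z ∈ Ω, 0 < (σ z).re := by
    intro z hz
    have h1 := hfr z hz
    simp only [hσ, Complex.sub_re]
    rw [hre_l, hre_l]
    linarith
  set v : Eucl d := L.linear 1 with hv
  have hlin : ∀ c : ℂ, L.linear c = c • v := by
    intro c; rw [hv, ← L.linear.map_smul, smul_eq_mul, mul_one]
  have hxs : x - ξ = (p - s) • v := by
    rw [← hp, ← hs, ← hlin]
    exact (L.linearMap_vsub p s).symm
  have hys : y - ξ = (q - s) • v := by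
    rw [← hq, ← hs, ← hlin]
    exact (L.linearMap_vsub q s).symm
  have hσx : σ x = -((p - s) * ℓ v) := by
    have h1 : ℓ x - ℓ ξ = (p - s) * ℓ v := by
      rw [← map_sub, show x - ξ = (p - s) • v from hxs, map_smul, smul_eq_mul]
    simp only [hσ]
    linear_combination -h1
  have hσy : σ y = -((q - s) * ℓ v) := by
    have h1 : ℓ y - ℓ ξ = (q - s) * ℓ v := by
      rw [← map_sub, show y - ξ = (q - s) • v from hys, map_smul, smul_eq_mul]
    simp only [hσ]
    linear_combination -h1
  have habsx : ‖σ x‖ = ‖p - s‖ * ‖ℓ v‖ := by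
    rw [hσx, norm_neg, norm_mul]
  have habsy : ‖σ y‖ = ‖q - s‖ * ‖ℓ v‖ := by
    rw [hσy, norm_neg, norm_mul]
  have hnormx : ‖x - ξ‖ = ‖p - s‖ * ‖v‖ := by
    rw [hxs, norm_smul]
  have hnormy : ‖y - ξ‖ = ‖q - s‖ * ‖v‖ := by
    rw [hys, norm_smul]
  have hσxpos : 0 < ‖σ x‖ := by
    apply norm_pos_iff.mpr
    intro h0
    have h1 := hσre x hx
    rw [h0] at h1
    simp at h1
  have hσypos : 0 < ‖σ y‖ := by
    apply norm_pos_iff.mpr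
    intro h0
    have h1 := hσre y hy
    rw [h0] at h1
    simp at h1
  have habs_ps : 0 < ‖p - s‖ := by
    rw [habsx] at hσxpos
    nlinarith [norm_nonneg (p - s), norm_nonneg (ℓ v)]
  have habs_qs : 0 < ‖q - s‖ := by
    rw [habsy] at hσypos
    nlinarith [norm_nonneg (q - s), norm_nonneg (ℓ v)]
  have habs_lv : 0 < ‖ℓ v‖ := by
    rw [habsx] at hσxpos
    nlinarith [norm_nonneg (p - s), norm_nonneg (ℓ v)]
  have hxne : x ≠ ξ := fun h => hξ (h ▸ hx)
  have hnx : 0 < ‖x - ξ‖ := by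
    rw [norm_pos_iff]
    exact sub_ne_zero.mpr hxne
  have hnv : 0 < ‖v‖ := by
    rw [hnormx] at hnx
    nlinarith [norm_nonneg v]
  have hny : 0 < ‖y - ξ‖ := by rw [hnormy]; positivity
  have hratio : ‖x - ξ‖ / ‖y - ξ‖ = ‖σ x‖ / ‖σ y‖ := by
    rw [hnormx, hnormy, habsx, habsy]
    rw [mul_div_mul_right _ _ hnv.ne', mul_div_mul_right _ _ habs_lv.ne']
  have hlog : Real.log (‖x - ξ‖ / ‖y - ξ‖)
      = Real.log (‖σ x‖) - Real.log (‖σ y‖) := by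
    rw [hratio, Real.log_div hσxpos.ne' hσypos.ne']
  rw [hlog]
  unfold kobayashiDist
  apply le_csInf
  · exact ratio_bound_aux d Ω hopen hconv x y hx hy
  · rintro r ⟨m, a, b, f, ha, hb, hfd, hfm, hfa, hchain, hfb, rfl⟩
    set u : Fin (m + 1) → ℝ := fun i => Real.log (‖σ (f i (a i))‖) with hu
    set w : Fin (m + 1) → ℝ := fun i => Real.log (‖σ (f i (b i))‖) with hw
    have hdisc : ∀ i, |u i - w i| ≤ 2 * poincareDist (a i) (b i) := by
      intro i
      have hgd : DifferentiableOn ℂ (fun ζ => σ (f i ζ)) (ball 0 1) := by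
        simp only [hσ]
        exact DifferentiableOn.const_sub (ℓ.differentiable.comp_differentiableOn (hfd i)) _
      have hgre : ∀ ζ ∈ ball (0 : ℂ) 1, 0 < ((fun ζ => σ (f i ζ)) ζ).re :=
        fun ζ hζ => hσre _ (hfm i hζ)
      have hai : ‖a i‖ < 1 := by
        have := ha i
        rwa [show unitDisc = ball (0:ℂ) 1 from rfl, mem_ball_zero_iff] at this
      have hbi : ‖b i‖ < 1 := by
        have := hb i
        rwa [show unitDisc = ball (0:ℂ) 1 from rfl, mem_ball_zero_iff] at this
      exact disc_pair (fun ζ => σ (f i ζ)) hgd hgre (a i) (b i) hai hbi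
    have hlink : ∀ i : Fin m, w i.castSucc = u i.succ := by
      intro i
      simp only [hu, hw, hchain i]
    have htel := fin_telescope m u w hlink
    have hu0 : u 0 = Real.log (‖σ x‖) := by
      simp only [hu, hfa]
    have hwl : w (Fin.last m) = Real.log (‖σ y‖) := by
      simp only [hw, hfb]
    rw [← hu0, ← hwl]
    have hsum : ∑ i, |u i - w i| ≤ ∑ i, 2 * poincareDist (a i) (b i) :=
      Finset.sum_le_sum fun i _ => hdisc i
    rw [← Finset.mul_sum] at hsum
    linarith

end
end
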